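/- arXiv:1008.2457 — 9 statements merged into one kernel-verified Lean document; each statement's English description precedes it below -/
import Mathlib

section
/- Let f : ℝ² → ℝ be twice continuously differentiable, and let E be a subset of ℝ² such that the gradient of f vanishes at every point of E. Then the image f(E) has one-dimensional Lebesgue measure zero. -/
open MeasureTheory Set Metric Filter Asymptotics
open scoped NNReal ENNReal Topology

local notation "V2" => EuclideanSpace ℝ (Fin 2)

lemma fin2_resolve {i j k : Fin 2} (hij : i ≠ j) : k = i ∨ k = j := by
  fin_cases i <;> fin_cases j <;> fin_cases k <;> simp_all

lemma two_coord {i j : Fin 2} (hij : i ≠ j) (w : V2) :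
    w = w i • EuclideanSpace.single i (1:ℝ) + w j • EuclideanSpace.single j 1 := by
  ext k
  rcases fin2_resolve (k := k) hij with rfl | rfl <;>
    simp [EuclideanSpace.single_apply, hij, hij.symm]

lemma norm_le_two_coord {i j : Fin 2} (hij : i ≠ j) (w : V2) :
    ‖w‖ ≤ |w i| + |w j| := by
  calc ‖w‖ = ‖w i • EuclideanSpace.single i (1:ℝ) + w j • EuclideanSpace.single j 1‖ := by
        rw [← two_coord hij w]
    _ ≤ ‖w i • EuclideanSpace.single i (1:ℝ)‖ + ‖w j • EuclideanSpace.single j (1:ℝ)‖ :=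
        norm_add_le _ _
    _ = |w i| + |w j| := by
        simp [norm_smul, EuclideanSpace.norm_single, Real.norm_eq_abs]

lemma det_zero_clm : (0 : ℝ →L[ℝ] ℝ).det = 0 := by
  simp [ContinuousLinearMap.det]

lemma comp_lipschitz_deriv_zero {f : V2 → ℝ} {γ : ℝ → V2} {T : Set ℝ} {L : ℝ≥0}
    (hγ : LipschitzOnWith L γ T) {t : ℝ} (ht : t ∈ T)
    (hf0 : HasFDerivAt f (0 : V2 →L[ℝ] ℝ) (γ t)) :
    HasFDerivWithinAt (f ∘ γ) (0 : ℝ →L[ℝ] ℝ) T t := by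
  have h1 : (fun y => f y - f (γ t)) =o[nhds (γ t)] fun y => y - γ t := by
    simpa using hf0.isLittleO
  have h2 : Tendsto γ (nhdsWithin t T) (nhds (γ t)) := hγ.continuousOn _ ht
  have h3 := h1.comp_tendsto h2
  have h4 : (fun t' => γ t' - γ t) =O[nhdsWithin t T] fun t' => t' - t := by
    rw [isBigO_iff]
    refine ⟨L, ?_⟩
    filter_upwards [self_mem_nhdsWithin] with t' ht'
    have := hγ.dist_le_mul _ ht' _ ht
    simpa [dist_eq_norm] using this
  have h5 := h3.trans_isBigO h4
  exact HasFDerivWithinAt.of_isLittleO (by simpa [Function.comp_def] using h5)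

lemma image_null_of_graph (f : V2 → ℝ) (hd : Differentiable ℝ f)
    (S : Set V2) (hS0 : ∀ x ∈ S, fderiv ℝ f x = 0)
    (j : Fin 2) (L : ℝ≥0)
    (hgr : ∀ x ∈ S, ∀ y ∈ S, ‖x - y‖ ≤ L * |x j - y j|) :
    volume (f '' S) = 0 := by
  classical
  set pr : V2 → ℝ := fun x => x j with hpr
  have hinj : InjOn pr S := by
    intro x hx y hy hxy
    have h1 := hgr x hx y hy
    have h2 : x j - y j = 0 := sub_eq_zero.2 hxy
    rw [h2] at h1
    simp only [abs_zero, mul_zero] at h1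
    have := norm_le_zero_iff.1 h1
    exact sub_eq_zero.1 this
  set T := pr '' S with hT
  set γ := Function.invFunOn pr S with hγ
  have hγS : ∀ t ∈ T, γ t ∈ S := by
    rintro t ⟨x, hx, rfl⟩
    exact Function.invFunOn_mem ⟨x, hx, rfl⟩
  have hγpr : ∀ t ∈ T, pr (γ t) = t := by
    rintro t ⟨x, hx, rfl⟩
    exact Function.invFunOn_eq ⟨x, hx, rfl⟩
  have hγx : ∀ x ∈ S, γ (pr x) = x := fun x hx => hinj.leftInvOn_invFunOn hx
  have hlip : LipschitzOnWith L γ T := by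
    apply LipschitzOnWith.of_dist_le_mul
    intro t ht t' ht'
    calc dist (γ t) (γ t') = ‖γ t - γ t'‖ := dist_eq_norm _ _
      _ ≤ L * |(γ t) j - (γ t') j| := hgr _ (hγS t ht) _ (hγS t' ht')
      _ = L * dist t t' := by
          rw [show (γ t) j = pr (γ t) from rfl, show (γ t') j = pr (γ t') from rfl,
            hγpr t ht, hγpr t' ht', Real.dist_eq]
  have himg : f '' S = (f ∘ γ) '' T := by
    ext z
    constructor
    · rintro ⟨x, hx, rfl⟩
      exact ⟨pr x, ⟨x, hx, rfl⟩, by simp [Function.comp, hγx x hx]⟩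
    · rintro ⟨t, ht, rfl⟩
      exact ⟨γ t, hγS t ht, rfl⟩
  rw [himg]
  apply addHaar_image_eq_zero_of_det_fderivWithin_eq_zero (μ := volume)
    (f' := fun _ => (0 : ℝ →L[ℝ] ℝ))
  · intro t ht
    apply comp_lipschitz_deriv_zero hlip ht
    have h := (hd (γ t)).hasFDerivAt
    rwa [hS0 _ (hγS t ht)] at h
  · intro t _
    exact det_zero_clm

lemma part2_local (f : V2 → ℝ) (hf : ContDiff ℝ 2 f) (E : Set V2)
    (hE : ∀ p ∈ E, fderiv ℝ f p = 0) (p : V2)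
    (hp : fderiv ℝ (fderiv ℝ f) p ≠ 0) :
    ∃ U ∈ 𝓝 p, volume (f '' (E ∩ U)) = 0 := by
  classical
  obtain ⟨u, hu⟩ : ∃ u, fderiv ℝ (fderiv ℝ f) p u ≠ 0 := by
    by_contra h
    push_neg at h
    exact hp (ContinuousLinearMap.ext fun u => by simp [h u])
  obtain ⟨v, hv⟩ : ∃ v, fderiv ℝ (fderiv ℝ f) p u v ≠ 0 := by
    by_contra h
    push_neg at h
    exact hu (ContinuousLinearMap.ext fun v => by simp [h v])
  set lam : V2 →L[ℝ] ℝ :=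
    (ContinuousLinearMap.apply ℝ ℝ v).comp (fderiv ℝ (fderiv ℝ f) p) with hlam
  have hlamu : lam u ≠ 0 := hv
  set h : V2 → ℝ := fun x => fderiv ℝ f x v with hh
  have hf1 : ContDiff ℝ 1 (fderiv ℝ f) := hf.fderiv_right (by norm_num)
  have hstrict : HasStrictFDerivAt h lam p := by
    have h1 : HasStrictFDerivAt (fderiv ℝ f) (fderiv ℝ (fderiv ℝ f) p) p :=
      hf1.contDiffAt.hasStrictFDerivAt one_ne_zero
    exact (ContinuousLinearMap.apply ℝ ℝ v).hasStrictFDerivAt.comp p h1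
  have hE' : ∀ x ∈ E, h x = 0 := fun x hx => by simp [hh, hE x hx]
  have hex : ∃ i : Fin 2, lam (EuclideanSpace.single i (1:ℝ)) ≠ 0 := by
    by_contra hcon
    push_neg at hcon
    apply hlamu
    rw [two_coord (show (0:Fin 2) ≠ 1 by decide) u]
    simp [map_add, _root_.map_smul, hcon 0, hcon 1]
  obtain ⟨i, hi⟩ := hex
  obtain ⟨j, hij⟩ : ∃ j, i ≠ j := by
    fin_cases i
    exacts [⟨1, by decide⟩, ⟨0, by decide⟩]
  set a : ℝ := lam (EuclideanSpace.single i 1) with ha'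
  set b : ℝ := lam (EuclideanSpace.single j 1) with hb'
  have ha : 0 < |a| := abs_pos.2 hi
  set c : ℝ≥0 := Real.toNNReal (|a|/2) with hc'
  have hc : 0 < c := Real.toNNReal_pos.2 (by positivity)
  obtain ⟨U, hU, happ⟩ := hstrict.approximates_deriv_on_nhds (Or.inr hc)
  refine ⟨U, hU, ?_⟩
  have hL0nn : (0:ℝ) ≤ (2*|b| + |a|)/|a| + 1 := by positivity
  apply image_null_of_graph f (hf.differentiable (by norm_num)) _
    (fun x hx => hE x hx.1) j (Real.toNNReal ((2*|b| + |a|)/|a| + 1))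
  intro x hx y hy
  have h0 : ‖h x - h y - lam (x - y)‖ ≤ c * ‖x - y‖ := happ x hx.2 y hy.2
  rw [hE' x hx.1, hE' y hy.1] at h0
  have hcoe : (c:ℝ) = |a|/2 := Real.coe_toNNReal _ (by positivity)
  have h0' : |lam (x - y)| ≤ |a|/2 * ‖x - y‖ := by
    have e1 : (0:ℝ) - 0 - lam (x - y) = -(lam (x - y)) := by ring
    rw [e1, norm_neg, Real.norm_eq_abs, hcoe] at h0
    exact h0
  have hwj : (x - y) j = x j - y j := by rw [PiLp.sub_apply]
  have hwdec : lam (x - y) = (x - y) i * a + (x - y) j * b := by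
    conv_lhs => rw [two_coord hij (x - y)]
    rw [map_add, lam.map_smul, lam.map_smul, smul_eq_mul, smul_eq_mul, ha', hb']
  have hnorm : ‖x - y‖ ≤ |(x - y) i| + |(x - y) j| := norm_le_two_coord hij (x - y)
  have htri : |(x - y) i| * |a| ≤ |lam (x - y)| + |(x - y) j| * |b| := by
    have h1 : (x - y) i * a = lam (x - y) - (x - y) j * b := by rw [hwdec]; ring
    calc |(x - y) i| * |a| = |(x - y) i * a| := (abs_mul _ _).symm
      _ = |lam (x - y) - (x - y) j * b| := by rw [h1]
      _ ≤ |lam (x - y)| + |(x - y) j * b| := abs_sub _ _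
      _ = |lam (x - y)| + |(x - y) j| * |b| := by rw [abs_mul]
  have main : ‖x - y‖ * |a| ≤ (2*|b| + 2*|a|) * |(x - y) j| := by
    nlinarith [h0', hnorm, htri, abs_nonneg ((x - y) i), abs_nonneg ((x - y) j),
      norm_nonneg (x - y), abs_nonneg b]
  have hLcoe : ((Real.toNNReal ((2*|b| + |a|)/|a| + 1) : ℝ≥0) : ℝ)
      = (2*|b| + |a|)/|a| + 1 := Real.coe_toNNReal _ hL0nn
  rw [hLcoe, ← hwj]
  have hL0a : ((2*|b| + |a|)/|a| + 1) * |a| = 2*|b| + 2*|a| := by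
    rw [add_mul, div_mul_cancel₀ _ ha.ne', one_mul]
    ring
  rw [← mul_le_mul_iff_left₀ ha]
  calc ‖x - y‖ * |a| ≤ (2*|b| + 2*|a|) * |(x - y) j| := main
    _ = ((2*|b| + |a|)/|a| + 1) * |(x - y) j| * |a| := by rw [mul_right_comm, hL0a]

lemma floor_grid_abs {δ s t : ℝ} (hδ : 0 < δ) (h : ⌊s/δ⌋ = ⌊t/δ⌋) : |s - t| < δ := by
  have h1 : (⌊t/δ⌋ : ℝ) ≤ s/δ := by rw [← h]; exact Int.floor_le _
  have h2 : s/δ < ⌊t/δ⌋ + 1 := by rw [← h]; exact Int.lt_floor_add_one _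
  have h3 : (⌊t/δ⌋ : ℝ) ≤ t/δ := Int.floor_le _
  have h4 : t/δ < ⌊t/δ⌋ + 1 := Int.lt_floor_add_one _
  have hs : s/δ*δ = s := div_mul_cancel₀ _ hδ.ne'
  have ht : t/δ*δ = t := div_mul_cancel₀ _ hδ.ne'
  rw [abs_sub_lt_iff]
  constructor <;> nlinarith [h1, h2, h3, h4]

def gridCell (δ : ℝ) (k : ℤ × ℤ) : Set (EuclideanSpace ℝ (Fin 2)) :=
  {x | ⌊x 0 / δ⌋ = k.1 ∧ ⌊x 1 / δ⌋ = k.2}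

lemma measurable_coord (i : Fin 2) : Measurable fun x : V2 => x i :=
  (EuclideanSpace.proj (𝕜 := ℝ) i).continuous.measurable

lemma gridCell_measurable (δ : ℝ) (k : ℤ × ℤ) : MeasurableSet (gridCell δ k) := by
  have m0 : MeasurableSet {x : V2 | ⌊x 0 / δ⌋ = k.1} :=
    (((measurable_coord 0).div_const δ).floor) (measurableSet_singleton k.1)
  have m1 : MeasurableSet {x : V2 | ⌊x 1 / δ⌋ = k.2} :=
    (((measurable_coord 1).div_const δ).floor) (measurableSet_singleton k.2)
  exact m0.inter m1

lemma gridCell_mem (δ : ℝ) (x : V2) : x ∈ gridCell δ (⌊x 0/δ⌋, ⌊x 1/δ⌋) := ⟨rfl, rfl⟩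

lemma gridCell_norm_le {δ : ℝ} (hδ : 0 < δ) {k : ℤ × ℤ} {x y : V2}
    (hx : x ∈ gridCell δ k) (hy : y ∈ gridCell δ k) : ‖x - y‖ ≤ 2*δ := by
  calc ‖x - y‖ ≤ |(x - y) 0| + |(x - y) 1| := norm_le_two_coord (by decide) _
    _ = |x 0 - y 0| + |x 1 - y 1| := by rw [PiLp.sub_apply, PiLp.sub_apply]
    _ ≤ δ + δ := add_le_add (floor_grid_abs hδ (hx.1.trans hy.1.symm)).le
        (floor_grid_abs hδ (hx.2.trans hy.2.symm)).le
    _ = 2*δ := by ring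

lemma gridCell_disjoint (δ : ℝ) : Pairwise (Function.onFun Disjoint (gridCell δ)) := by
  intro k k' hkk'
  rw [Function.onFun, Set.disjoint_left]
  rintro x ⟨hx1, hx2⟩ ⟨hy1, hy2⟩
  exact hkk' (Prod.ext (hx1.symm.trans hy1) (hx2.symm.trans hy2))

lemma null_of_forall_le {μ C : ℝ≥0∞} (hC : C ≠ ⊤) (h : ∀ ε : ℝ≥0, 0 < ε → μ ≤ ε * C) :
    μ = 0 := by
  rcases eq_or_ne C 0 with rfl | hC0
  · simpa using h 1 one_pos
  · refine le_antisymm ?_ zero_le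
    refine ENNReal.le_of_forall_pos_le_add fun ε hε _ => ?_
    have hC' : 0 < C.toNNReal := ENNReal.toNNReal_pos hC0 hC
    have hdiv : (0:ℝ≥0) < ε / C.toNNReal := by positivity
    calc μ ≤ ((ε / C.toNNReal : ℝ≥0) : ℝ≥0∞) * C := h _ hdiv
      _ = ((ε / C.toNNReal : ℝ≥0) : ℝ≥0∞) * (C.toNNReal : ℝ≥0) := by
          rw [ENNReal.coe_toNNReal hC]
      _ = (((ε / C.toNNReal) * C.toNNReal : ℝ≥0) : ℝ≥0∞) := by rw [ENNReal.coe_mul]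
      _ = (ε : ℝ≥0∞) := by rw [div_mul_cancel₀ _ hC'.ne']
      _ ≤ 0 + ε := by simp

lemma hausdorff2_closedBall_ne_top (R : ℝ) : μH[2] (closedBall (0:V2) R) ≠ ⊤ := by
  set e := WithLp.equiv 2 (Fin 2 → ℝ) with he
  have hlip : LipschitzWith ((2:ℝ≥0) ^ (2⁻¹:ℝ)) ⇑e.symm := by
    intro x y
    have h := PiLp.antilipschitzWith_ofLp 2 (fun _ : Fin 2 => ℝ) (e.symm x) (e.symm y)
    simpa [he] using h
  have hsub : closedBall (0:V2) R ⊆ ⇑e.symm '' closedBall (0 : Fin 2 → ℝ) R := by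
    intro x hx
    refine ⟨e x, ?_, e.symm_apply_apply x⟩
    rw [mem_closedBall_zero_iff] at hx ⊢
    have h' : ‖e x‖₊ ≤ ‖x‖₊ := by
      exact (by simpa [enorm_eq_nnnorm] using PiLp.lipschitzWith_ofLp 2 (fun _ : Fin 2 => ℝ) x 0 :
        ‖x.ofLp‖₊ ≤ ‖x‖₊)
    calc ‖e x‖ ≤ ‖x‖ := by exact_mod_cast h'
      _ ≤ R := hx
  have hpi : (μH[2] : Measure (Fin 2 → ℝ)) = volume := by
    have := hausdorffMeasure_pi_real (ι := Fin 2)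
    rwa [Fintype.card_fin, Nat.cast_ofNat] at this
  have hle : μH[2] (closedBall (0:V2) R) ≤
      (((2:ℝ≥0) ^ (2⁻¹:ℝ) : ℝ≥0) : ℝ≥0∞) ^ (2:ℝ) * μH[2] (closedBall (0 : Fin 2 → ℝ) R) := by
    refine (measure_mono hsub).trans ?_
    exact hlip.lipschitzOnWith.hausdorffMeasure_image_le (by norm_num)
  apply ne_top_of_le_ne_top _ hle
  apply ENNReal.mul_ne_top
  · exact ENNReal.rpow_ne_top_of_nonneg (by norm_num) ENNReal.coe_ne_top
  · rw [hpi]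
    exact measure_closedBall_lt_top.ne

lemma part1 (f : V2 → ℝ) (hf : ContDiff ℝ 2 f) (A : Set V2)
    (hA : ∀ p ∈ A, fderiv ℝ f p = 0) (hA2 : ∀ p ∈ A, fderiv ℝ (fderiv ℝ f) p = 0)
    (R : ℕ) : volume (f '' (A ∩ closedBall 0 (R:ℝ))) = 0 := by
  rw [← hausdorffMeasure_real]
  set S := A ∩ closedBall (0:V2) (R:ℝ) with hS
  have hf1 : ContDiff ℝ 1 (fderiv ℝ f) := hf.fderiv_right (by norm_num)
  have hg : Continuous (fderiv ℝ (fderiv ℝ f)) := hf1.continuous_fderiv one_ne_zero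
  apply null_of_forall_le (hausdorff2_closedBall_ne_top (R:ℝ))
  intro ε hε
  obtain ⟨δ0, hδ0, hδ⟩ := (Metric.uniformContinuousOn_iff (f := fderiv ℝ (fderiv ℝ f))).1
    ((isCompact_closedBall (0:V2) ((R:ℝ)+1)).uniformContinuousOn_of_continuous
      (f := fderiv ℝ (fderiv ℝ f)) hg.continuousOn) ε (by exact_mod_cast hε)
  set δ : ℝ := min δ0 1 / 4 with hδdef
  have hδpos : 0 < δ := div_pos (lt_min hδ0 one_pos) (by norm_num)
  have h2δ : 2*δ ≤ min δ0 1 / 2 := by rw [hδdef]; ring_nf; linarith [lt_min hδ0 one_pos]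
  have hmin1 : min δ0 1 ≤ 1 := min_le_right _ _
  have hminδ0 : min δ0 1 ≤ δ0 := min_le_left _ _
  have key : ∀ k : ℤ × ℤ, HolderOnWith ε 2 f (S ∩ gridCell δ k) := by
    intro k x hx y hy
    have hx2 : ‖x‖ ≤ (R:ℝ) := by
      have := hx.1.2; rwa [mem_closedBall_zero_iff] at this
    have hxy : ‖x - y‖ ≤ 2*δ := gridCell_norm_le hδpos hx.2 hy.2
    have hgz : ∀ z ∈ closedBall x ‖x - y‖, ‖fderiv ℝ (fderiv ℝ f) z‖ ≤ (ε:ℝ) := by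
      intro z hz
      rw [mem_closedBall, dist_eq_norm] at hz
      have hzx : ‖z - x‖ ≤ 2*δ := hz.trans hxy
      have hzK2 : z ∈ closedBall (0:V2) ((R:ℝ)+1) := by
        rw [mem_closedBall_zero_iff]
        calc ‖z‖ = ‖x + (z - x)‖ := by rw [add_sub_cancel]
          _ ≤ ‖x‖ + ‖z - x‖ := norm_add_le _ _
          _ ≤ R + 1 := add_le_add hx2 (hzx.trans (by linarith))
      have hxK2 : x ∈ closedBall (0:V2) ((R:ℝ)+1) := by
        rw [mem_closedBall_zero_iff]; linarith
      have hdist : dist z x < δ0 := by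
        rw [dist_eq_norm]
        calc ‖z - x‖ ≤ 2*δ := hzx
          _ ≤ min δ0 1 / 2 := h2δ
          _ < δ0 := by linarith
      have hlt := hδ z hzK2 x hxK2 hdist
      rw [hA2 x hx.1.1] at hlt
      exact (dist_zero_right (fderiv ℝ (fderiv ℝ f) z)).symm.le.trans hlt.le
    have hDf : ∀ z ∈ closedBall x ‖x - y‖, ‖fderiv ℝ f z‖ ≤ (ε:ℝ) * ‖x - y‖ := by
      intro z hz
      have hmv := (convex_closedBall x ‖x - y‖).norm_image_sub_le_of_norm_fderiv_le
        (fun w _ => (hf1.differentiable one_ne_zero).differentiableAt) hgz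
        (mem_closedBall_self (norm_nonneg _)) hz
      rw [hA x hx.1.1, sub_zero] at hmv
      calc ‖fderiv ℝ f z‖ ≤ ε * ‖z - x‖ := hmv
        _ ≤ ε * ‖x - y‖ := by
            apply mul_le_mul_of_nonneg_left _ ε.coe_nonneg
            rw [← dist_eq_norm]
            exact mem_closedBall.1 hz
    have hfb : ‖f y - f x‖ ≤ (ε:ℝ) * ‖x - y‖ * ‖y - x‖ :=
      (convex_closedBall x ‖x - y‖).norm_image_sub_le_of_norm_fderiv_le
        (fun w _ => (hf.differentiable (by norm_num)).differentiableAt) hDf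
        (mem_closedBall_self (norm_nonneg _))
        (by rw [mem_closedBall, dist_eq_norm, norm_sub_rev])
    have hfxy : |f x - f y| ≤ (ε:ℝ) * ‖x - y‖^2 := by
      rw [abs_sub_comm]
      calc |f y - f x| = ‖f y - f x‖ := (Real.norm_eq_abs _).symm
        _ ≤ ε * ‖x - y‖ * ‖y - x‖ := hfb
        _ = ε * ‖x - y‖^2 := by rw [norm_sub_rev]; ring
    calc edist (f x) (f y) = ENNReal.ofReal |f x - f y| := by rw [edist_dist, Real.dist_eq]
      _ ≤ ENNReal.ofReal ((ε:ℝ) * ‖x - y‖^2) := ENNReal.ofReal_le_ofReal hfxy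
      _ = (ε:ℝ≥0∞) * ENNReal.ofReal (‖x - y‖^2) := by
          rw [ENNReal.ofReal_mul ε.coe_nonneg, ENNReal.ofReal_coe_nnreal]
      _ = (ε:ℝ≥0∞) * ENNReal.ofReal ‖x - y‖ ^ (((2:ℝ≥0)):ℝ) := by
          congr 1
          rw [show (((2:ℝ≥0)):ℝ) = (2:ℝ) by norm_num]
          rw [ENNReal.ofReal_rpow_of_nonneg (norm_nonneg _) (by norm_num : (0:ℝ) ≤ 2)]
          rw [Real.rpow_two]
      _ = (ε:ℝ≥0∞) * edist x y ^ (((2:ℝ≥0)):ℝ) := by rw [edist_dist, dist_eq_norm]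
  have hcover : f '' S ⊆ ⋃ k : ℤ × ℤ, f '' (S ∩ gridCell δ k) := by
    rintro z ⟨x, hx, rfl⟩
    exact mem_iUnion.2 ⟨(⌊x 0/δ⌋, ⌊x 1/δ⌋), ⟨x, ⟨hx, gridCell_mem δ x⟩, rfl⟩⟩
  calc μH[1] (f '' S) ≤ ∑' k : ℤ × ℤ, μH[1] (f '' (S ∩ gridCell δ k)) :=
        (measure_mono hcover).trans (measure_iUnion_le _)
    _ ≤ ∑' k : ℤ × ℤ, (ε:ℝ≥0∞)^(1:ℝ) * μH[((2:ℝ≥0):ℝ)*1] (S ∩ gridCell δ k) := by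
        apply ENNReal.tsum_le_tsum
        intro k
        exact (key k).hausdorffMeasure_image_le (by norm_num) (by norm_num)
    _ = ∑' k : ℤ × ℤ, (ε:ℝ≥0∞) * μH[2] (S ∩ gridCell δ k) := by norm_num
    _ ≤ ∑' k : ℤ × ℤ, (ε:ℝ≥0∞) * μH[2] (closedBall (0:V2) (R:ℝ) ∩ gridCell δ k) := by
        apply ENNReal.tsum_le_tsum
        intro k
        apply mul_le_mul_right
        apply measure_mono
        exact inter_subset_inter_left _ inter_subset_right
    _ = (ε:ℝ≥0∞) * ∑' k : ℤ × ℤ, μH[2] (closedBall (0:V2) (R:ℝ) ∩ gridCell δ k) :=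
        ENNReal.tsum_mul_left
    _ = (ε:ℝ≥0∞) * μH[2] (⋃ k : ℤ × ℤ, closedBall (0:V2) (R:ℝ) ∩ gridCell δ k) := by
        rw [measure_iUnion]
        · exact fun k k' hkk' =>
            ((gridCell_disjoint δ) hkk').mono inter_subset_right inter_subset_right
        · exact fun k => measurableSet_closedBall.inter (gridCell_measurable δ k)
    _ ≤ (ε:ℝ≥0∞) * μH[2] (closedBall (0:V2) (R:ℝ)) := by
        apply mul_le_mul_right
        apply measure_mono
        exact iUnion_subset fun k => inter_subset_left

/-- If `f : ℝ² → ℝ` is twice continuously differentiable and its gradient vanishes at every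
point of `E`, then `f '' E` has one-dimensional Lebesgue measure zero. -/
theorem whitney_sard_C2 (f : EuclideanSpace ℝ (Fin 2) → ℝ) (hf : ContDiff ℝ 2 f)
    (E : Set (EuclideanSpace ℝ (Fin 2)))
    (hE : ∀ p ∈ E, fderiv ℝ f p = 0) :
    volume (f '' E) = 0 := by
  classical
  set A : Set V2 := {p ∈ E | fderiv ℝ (fderiv ℝ f) p = 0} with hA
  set B : Set V2 := E \ A with hB
  have hBcrit : ∀ p ∈ B, fderiv ℝ (fderiv ℝ f) p ≠ 0 := by
    intro p hp hcon
    exact hp.2 ⟨hp.1, hcon⟩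
  have hBU : ∀ p, p ∈ B → ∃ U ∈ 𝓝 p, volume (f '' (E ∩ U)) = 0 :=
    fun p hp => part2_local f hf E hE p (hBcrit p hp)
  choose! W hW1 hW2 using hBU
  obtain ⟨t, htB, htc, htcov⟩ :=
    TopologicalSpace.countable_cover_nhdsWithin
      (f := W) (s := B) (fun p hp => nhdsWithin_le_nhds (hW1 p hp))
  have hdecomp : f '' E ⊆
      (⋃ n : ℕ, f '' (A ∩ closedBall 0 (n:ℝ))) ∪ ⋃ p ∈ t, f '' (E ∩ W p) := by
    rintro z ⟨x, hx, rfl⟩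
    by_cases hxA : x ∈ A
    · left
      obtain ⟨n, hn⟩ := exists_nat_ge ‖x‖
      exact mem_iUnion.2 ⟨n, ⟨x, ⟨hxA, by rwa [mem_closedBall_zero_iff]⟩, rfl⟩⟩
    · right
      have hxB : x ∈ B := ⟨hx, hxA⟩
      obtain ⟨p, hp, hxp⟩ := mem_iUnion₂.1 (htcov hxB)
      exact mem_iUnion₂.2 ⟨p, hp, ⟨x, ⟨hx, hxp⟩, rfl⟩⟩
  apply measure_mono_null hdecomp
  apply measure_union_null
  · apply measure_iUnion_null
    intro n
    exact part1 f hf A (fun p hp => hE p hp.1) (fun p hp => hp.2) n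
  · rw [measure_biUnion_null_iff htc]
    intro p hp
    exact hW2 p (htB hp)
end

section
/- Let f : ℝ² → ℝ be twice continuously differentiable, and let E be a connected subset of ℝ² such that the gradient of f vanishes at every point of E. Then f is constant on E. -/
open Set Metric MeasureTheory Filter ENNReal

local notation "V" => EuclideanSpace ℝ (Fin 2)

lemma flat_part_null (f : V → ℝ) (hf : ContDiff ℝ 2 f) (R : ℝ) (hR : 0 ≤ R)
    (s : Set V) (hsR : s ⊆ closedBall 0 R)
    (hs : ∀ p ∈ s, fderiv ℝ f p = 0 ∧ fderiv ℝ (fderiv ℝ f) p = 0) :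
    volume (f '' s) = 0 := by
  set g : V → (V →L[ℝ] ℝ) := fderiv ℝ f with hgdef
  have hg : ContDiff ℝ 1 g := hf.fderiv_right (by norm_num)
  set A : V → (V →L[ℝ] (V →L[ℝ] ℝ)) := fderiv ℝ g with hAdef
  have hA : Continuous A := (hg.fderiv_right (m := 0) (by norm_num)).continuous
  set v₁ : ℝ≥0∞ := volume (ball (0 : V) 1) with hv₁def
  have hv₁0 : v₁ ≠ 0 := (measure_ball_pos _ _ one_pos).ne'
  have hv₁top : v₁ ≠ ∞ := measure_ball_lt_top.ne
  set μB : ℝ≥0∞ := volume (closedBall (0 : V) (R + 1)) with hμBdef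
  have hμBtop : μB ≠ ∞ := measure_closedBall_lt_top.ne
  set Cst : ℝ≥0∞ := 32 * (μB / v₁) with hCstdef
  have hCsttop : Cst ≠ ∞ := by
    refine ENNReal.mul_ne_top (by norm_num) ?_
    exact (ENNReal.div_lt_top hμBtop hv₁0).ne
  -- main estimate
  have key : ∀ ε : ℝ, 0 < ε → volume (f '' s) ≤ ENNReal.ofReal ε * Cst := by
    intro ε hε
    -- uniform continuity of A on a big ball
    have hucA : UniformContinuousOn A (closedBall (0 : V) (R + 2)) :=
      (isCompact_closedBall _ _).uniformContinuousOn_of_continuous hA.continuousOn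
    have hucA' : ∀ e > 0, ∃ d > 0, ∀ x ∈ closedBall (0 : V) (R + 2),
        ∀ y ∈ closedBall (0 : V) (R + 2), dist x y < d → dist (A x) (A y) < e := by
      rw [← Metric.uniformContinuousOn_iff]
      exact hucA
    obtain ⟨δ₀, hδ₀, hδ₀prop⟩ := hucA' ε hε
    set δ : ℝ := min (δ₀ / 2) 1 with hδdef
    have hδpos : 0 < δ := lt_min (by linarith) one_pos
    have hδle1 : δ ≤ 1 := min_le_right _ _
    have hδltδ₀ : δ < δ₀ := lt_of_le_of_lt (min_le_left _ _) (by linarith)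
    -- pointwise estimates
    have claim1 : ∀ p ∈ s, ∀ z ∈ closedBall p δ, ‖A z‖ ≤ ε := by
      intro p hp z hz
      have hpball : p ∈ closedBall (0 : V) (R + 2) := by
        have := hsR hp
        simp only [mem_closedBall, dist_zero_right] at this ⊢
        have : dist p 0 ≤ R := by simpa [dist_zero_right] using this
        simp only [dist_zero_right] at this; linarith [this]
      have hzball : z ∈ closedBall (0 : V) (R + 2) := by
        have h1 : dist z p ≤ δ := mem_closedBall.1 hz
        have h2 : dist p 0 ≤ R := by simpa [mem_closedBall] using hsR hp
        have : dist z 0 ≤ δ + R := le_trans (dist_triangle z p 0) (by linarith)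
        simp only [mem_closedBall]; linarith
      have := hδ₀prop z hzball p hpball (lt_of_le_of_lt (mem_closedBall.1 hz) hδltδ₀)
      have h0 : A p = 0 := (hs p hp).2
      calc ‖A z‖ = dist (A z) (A p) := by rw [h0]; exact (dist_zero_right (A z)).symm
        _ ≤ ε := this.le
    have claim2 : ∀ p ∈ s, ∀ z ∈ closedBall p δ, ‖g z‖ ≤ ε * δ := by
      intro p hp z hz
      have hdiff : ∀ x ∈ closedBall p δ, DifferentiableAt ℝ g x :=
        fun x _ => (hg.differentiable one_ne_zero).differentiableAt
      have := (convex_closedBall p δ).norm_image_sub_le_of_norm_fderiv_le hdiff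
        (fun x hx => claim1 p hp x hx) (mem_closedBall_self hδpos.le) hz
      rw [(hs p hp).1, sub_zero] at this
      calc ‖g z‖ ≤ ε * ‖z - p‖ := this
        _ ≤ ε * δ := by
            have : ‖z - p‖ ≤ δ := by rw [← dist_eq_norm]; exact mem_closedBall.1 hz
            exact mul_le_mul_of_nonneg_left this hε.le
    have claim3 : ∀ p ∈ s, ∀ q ∈ closedBall p δ, |f q - f p| ≤ ε * δ * δ := by
      intro p hp q hq
      have hdiff : ∀ x ∈ closedBall p δ, DifferentiableAt ℝ f x :=
        fun x _ => (hf.differentiable (by norm_num)).differentiableAt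
      have := (convex_closedBall p δ).norm_image_sub_le_of_norm_fderiv_le hdiff
        (fun x hx => claim2 p hp x hx) (mem_closedBall_self hδpos.le) hq
      calc |f q - f p| ≤ ε * δ * ‖q - p‖ := by simpa [Real.norm_eq_abs] using this
        _ ≤ ε * δ * δ := by
            have : ‖q - p‖ ≤ δ := by rw [← dist_eq_norm]; exact mem_closedBall.1 hq
            exact mul_le_mul_of_nonneg_left this (by positivity)
    -- Vitali covering
    obtain ⟨u, hus, hdisj, hcov⟩ :=
      Vitali.exists_disjoint_subfamily_covering_enlargement_closedBall s id
        (fun _ => δ / 4) (δ / 4) (fun _ _ => le_rfl) 4 (by norm_num)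
    have hcov' : s ⊆ ⋃ b ∈ u, closedBall b δ := by
      intro a ha
      obtain ⟨b, hbu, hb⟩ := hcov a ha
      have : a ∈ closedBall b (4 * (δ / 4)) :=
        hb (mem_closedBall_self (by positivity))
      simp only [mem_iUnion]
      exact ⟨b, hbu, by simpa [show 4 * (δ / 4) = δ by ring] using this⟩
    -- u is finite
    have hufin : u.Finite := by
      obtain ⟨t, hts, htfin, htcov⟩ :=
        finite_cover_balls_of_compact (isCompact_closedBall (0 : V) R)
          (show 0 < δ / 8 by positivity)
      have husub : u ⊆ ⋃ x ∈ t, {y ∈ u | y ∈ ball x (δ / 8)} := by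
        intro b hb
        obtain ⟨x, hx, hbx⟩ := mem_iUnion₂.1 (htcov (hsR (hus hb)))
        exact mem_iUnion₂.2 ⟨x, hx, hb, hbx⟩
      refine Set.Finite.subset (Set.Finite.biUnion htfin fun x _ => ?_) husub
      refine Set.Subsingleton.finite ?_
      intro b hb b' hb' 
      by_contra hne
      have hd := hdisj hb.1 hb'.1 hne
      have : dist b b' < δ / 4 := by
        have h1 := mem_ball.1 hb.2
        have h2 := mem_ball.1 hb'.2
        calc dist b b' ≤ dist b x + dist x b' := dist_triangle _ _ _
          _ < δ / 8 + δ / 8 := by rw [dist_comm x b']; exact add_lt_add h1 h2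
          _ = δ / 4 := by ring
      have : b ∈ closedBall b (δ/4) ∩ closedBall b' (δ/4) :=
        ⟨mem_closedBall_self (by positivity), by simp [mem_closedBall, this.le]⟩
      exact (Set.disjoint_left.1 hd this.1) this.2
    -- counting bound
    set F := hufin.toFinset with hFdef
    have hcount : (F.card : ℝ≥0∞) * (ENNReal.ofReal ((δ/4)^2) * v₁) ≤ μB := by
      have hdisjF : (F : Set V).PairwiseDisjoint fun b => closedBall b (δ / 4) := by
        intro a ha b hb hab
        exact hdisj (by simpa [hFdef] using ha) (by simpa [hFdef] using hb) hab
      have hmeas : ∀ b ∈ F, MeasurableSet (closedBall b (δ / 4)) :=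
        fun b _ => measurableSet_closedBall
      have hunion := measure_biUnion_finset hdisjF hmeas (μ := volume)
      have hsub : (⋃ b ∈ F, closedBall b (δ / 4)) ⊆ closedBall (0 : V) (R + 1) := by
        refine iUnion₂_subset fun b hb => ?_
        intro z hz
        have hb' : b ∈ closedBall (0 : V) R := hsR (hus (by simpa [hFdef] using hb))
        have h1 : dist z b ≤ δ / 4 := mem_closedBall.1 hz
        have h2 : dist b 0 ≤ R := mem_closedBall.1 hb'
        have : dist z 0 ≤ δ / 4 + R := le_trans (dist_triangle z b 0) (by linarith)
        simp only [mem_closedBall]; linarith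
      calc (F.card : ℝ≥0∞) * (ENNReal.ofReal ((δ/4)^2) * v₁)
          = ∑ _b ∈ F, (ENNReal.ofReal ((δ/4)^2) * v₁) := by
            rw [Finset.sum_const, nsmul_eq_mul]
        _ = ∑ b ∈ F, volume (closedBall b (δ / 4)) := by
            refine Finset.sum_congr rfl fun b _ => ?_
            rw [Measure.addHaar_closedBall volume b (by positivity : (0:ℝ) ≤ δ/4)]
            simp [finrank_euclideanSpace_fin, hv₁def]
        _ = volume (⋃ b ∈ F, closedBall b (δ / 4)) := hunion.symm
        _ ≤ μB := measure_mono hsub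
    -- image bound
    have himg : volume (f '' s) ≤ (F.card : ℝ≥0∞) * ENNReal.ofReal (2 * (ε * δ * δ)) := by
      have hsub : f '' s ⊆ ⋃ b ∈ F, closedBall (f b) (ε * δ * δ) := by
        rintro - ⟨q, hq, rfl⟩
        obtain ⟨b, hbu, hb⟩ := mem_iUnion₂.1 (hcov' hq)
        refine mem_iUnion₂.2 ⟨b, by simpa [hFdef] using hbu, ?_⟩
        rw [mem_closedBall, Real.dist_eq]
        exact claim3 b (hus hbu) q hb
      calc volume (f '' s) ≤ volume (⋃ b ∈ F, closedBall (f b) (ε * δ * δ)) :=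
            measure_mono hsub
        _ ≤ ∑ b ∈ F, volume (closedBall (f b) (ε * δ * δ)) :=
            measure_biUnion_finset_le _ _
        _ = (F.card : ℝ≥0∞) * ENNReal.ofReal (2 * (ε * δ * δ)) := by
            rw [Finset.sum_congr rfl fun b _ => Real.volume_closedBall (f b) (ε * δ * δ)]
            rw [Finset.sum_const, nsmul_eq_mul]
    -- combine
    have harith : (2 : ℝ) * (ε * δ * δ) = (32 * ε) * ((δ/4)^2) := by ring
    calc volume (f '' s) ≤ (F.card : ℝ≥0∞) * ENNReal.ofReal (2 * (ε * δ * δ)) := himg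
      _ = ENNReal.ofReal (32 * ε) * ((F.card : ℝ≥0∞) * ENNReal.ofReal ((δ/4)^2)) := by
          rw [harith, ENNReal.ofReal_mul (by positivity)]
          ring
      _ ≤ ENNReal.ofReal (32 * ε) * (μB / v₁) := by
          refine mul_le_mul_right ?_ _
          rw [ENNReal.le_div_iff_mul_le (Or.inl hv₁0) (Or.inl hv₁top)]
          rw [mul_assoc]
          exact hcount
      _ ≤ ENNReal.ofReal ε * Cst := by
          rw [hCstdef, show (32:ℝ) * ε = ε * 32 by ring, ENNReal.ofReal_mul hε.le]
          rw [mul_assoc]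
          gcongr
          simp [ENNReal.ofReal_ofNat]
  -- conclude
  have htend : Tendsto (fun ε : ℝ => ENNReal.ofReal ε * Cst) (nhdsWithin 0 (Ioi 0)) (nhds 0) := by
    have h1 : Tendsto (fun ε : ℝ => ENNReal.ofReal ε) (nhdsWithin 0 (Ioi 0)) (nhds 0) := by
      have := (ENNReal.continuous_ofReal.tendsto 0)
      simpa using this.mono_left nhdsWithin_le_nhds
    simpa using ENNReal.Tendsto.mul_const h1 (Or.inr hCsttop)
  refine le_antisymm ?_ zero_le
  refine ge_of_tendsto htend ?_
  filter_upwards [self_mem_nhdsWithin] with ε (hε : ε ∈ Ioi (0:ℝ))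
  exact key ε hε

lemma decomp (z : V) : z = z 0 • EuclideanSpace.single (0 : Fin 2) (1:ℝ)
    + z 1 • EuclideanSpace.single (1 : Fin 2) (1:ℝ) := by
  ext i
  fin_cases i <;> simp [EuclideanSpace.single_apply]

lemma clm_apply_decomp (L : V →L[ℝ] ℝ) (z : V) :
    L z = z 0 * L (EuclideanSpace.single (0 : Fin 2) (1:ℝ))
      + z 1 * L (EuclideanSpace.single (1 : Fin 2) (1:ℝ)) := by
  conv_lhs => rw [decomp z]
  simp [smul_eq_mul]

lemma aux_inj (a b x0 x1 y0 y1 : ℝ) (hab : 0 < a ^ 2 + b ^ 2)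
    (e1 : a * x1 - b * x0 = a * y1 - b * y0)
    (e2 : x0 * a + x1 * b = y0 * a + y1 * b) : x0 = y0 ∧ x1 = y1 := by
  have k0 : (a ^ 2 + b ^ 2) * (x0 - y0) = 0 := by linear_combination a * e2 - b * e1
  have k1 : (a ^ 2 + b ^ 2) * (x1 - y1) = 0 := by linear_combination b * e2 + a * e1
  constructor
  · have := (mul_eq_zero.1 k0).resolve_left hab.ne'
    linarith
  · have := (mul_eq_zero.1 k1).resolve_left hab.ne'
    linarith

lemma nonflat_local_null (f : V → ℝ) (hf : ContDiff ℝ 2 f) (p : V)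
    (hAp : fderiv ℝ (fderiv ℝ f) p ≠ 0) :
    ∃ U : Set V, U ∈ nhds p ∧ volume (f '' ({q | fderiv ℝ f q = 0} ∩ U)) = 0 := by
  set g : V → (V →L[ℝ] ℝ) := fderiv ℝ f with hgdef
  have hg : ContDiff ℝ 1 g := hf.fderiv_right (by norm_num)
  set A : V → (V →L[ℝ] (V →L[ℝ] ℝ)) := fderiv ℝ g with hAdef
  -- find v w with A p v w ≠ 0
  have hvw : ∃ v w : V, A p v w ≠ 0 := by
    by_contra hcon
    push_neg at hcon
    exact hAp (by ext v w; simpa using hcon v w)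
  obtain ⟨v, w, hvw⟩ := hvw
  set φ : V → ℝ := fun z => g z w with hφdef
  set dφ : V →L[ℝ] ℝ := (A p).flip w with hdφdef
  have hdφv : dφ v = A p v w := rfl
  set a : ℝ := dφ (EuclideanSpace.single (0 : Fin 2) (1:ℝ)) with hadef
  set b : ℝ := dφ (EuclideanSpace.single (1 : Fin 2) (1:ℝ)) with hbdef
  have hab : a ^ 2 + b ^ 2 > 0 := by
    rcases eq_or_ne a 0 with ha | ha
    · rcases eq_or_ne b 0 with hb | hb
      · exfalso
        apply hvw
        rw [← hdφv, clm_apply_decomp dφ v, ← hadef, ← hbdef, ha, hb]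
        ring
      · positivity
    · positivity
  set ℓ : V →L[ℝ] ℝ := a • (EuclideanSpace.proj (1 : Fin 2)) - b • (EuclideanSpace.proj (0 : Fin 2)) with hℓdef
  have hℓz : ∀ z : V, ℓ z = a * z 1 - b * z 0 := by
    intro z; simp [hℓdef, smul_eq_mul]
  set D : V →L[ℝ] ℝ × ℝ := ℓ.prod dφ with hDdef
  have hDinj : Function.Injective D := by
    intro z z' hzz
    have h1 : ℓ z = ℓ z' := congrArg Prod.fst hzz
    have h2 : dφ z = dφ z' := congrArg Prod.snd hzz
    rw [hℓz, hℓz] at h1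
    rw [clm_apply_decomp dφ z, clm_apply_decomp dφ z', ← hadef, ← hbdef] at h2
    obtain ⟨h0, h1'⟩ := aux_inj a b (z 0) (z 1) (z' 0) (z' 1) hab h1 h2
    ext i
    match i with
    | 0 => exact h0
    | 1 => exact h1'
  set eD : V ≃L[ℝ] ℝ × ℝ :=
    (D.toLinearMap.linearEquivOfInjective hDinj
      (by simp [finrank_euclideanSpace_fin])).toContinuousLinearEquiv with heDdef
  have heD : ∀ z, eD z = D z := by
    intro z
    rw [heDdef]
    rw [LinearEquiv.coe_toContinuousLinearEquiv']
    exact D.toLinearMap.linearEquivOfInjective_apply hDinj _ z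
  set H : V → ℝ × ℝ := fun z => (ℓ z, φ z) with hHdef
  have hφC1 : ContDiff ℝ 1 φ := hg.clm_apply contDiff_const
  have hH : ContDiffAt ℝ 1 H p := ((ℓ.contDiff (n := 1)).prodMk hφC1).contDiffAt
  have hφ' : HasFDerivAt φ dφ p := by
    have hgp : HasFDerivAt g (A p) p := (hg.differentiable one_ne_zero p).hasFDerivAt
    have := hgp.clm_apply (hasFDerivAt_const w p)
    simpa using this
  have hH' : HasFDerivAt H (eD : V →L[ℝ] ℝ × ℝ) p := by
    have h1 : HasFDerivAt H D p := HasFDerivAt.prodMk ℓ.hasFDerivAt hφ'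
    have : (eD : V →L[ℝ] ℝ × ℝ) = D := ContinuousLinearMap.ext fun z => by
      rw [ContinuousLinearEquiv.coe_coe]; exact heD z
    rw [this]
    exact h1
  set Finv : ℝ × ℝ → V := hH.localInverse hH' one_ne_zero with hFinvdef
  have hstrict : HasStrictFDerivAt H (eD : V →L[ℝ] ℝ × ℝ) p := hH.hasStrictFDerivAt' hH' one_ne_zero
  have hleft : ∀ᶠ z in nhds p, Finv (H z) = z := hstrict.eventually_left_inverse
  have hinv_smooth : ContDiffAt ℝ 1 Finv (H p) := hH.to_localInverse hH' one_ne_zero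
  obtain ⟨T, hT, hTcd⟩ := hinv_smooth.contDiffOn le_rfl (by simp)
  set W : Set (ℝ × ℝ) := interior T with hWdef
  have hWopen : IsOpen W := isOpen_interior
  have hWnhds : W ∈ nhds (H p) := by
    rw [hWdef]
    exact interior_mem_nhds.mpr hT
  have hWcd : ContDiffOn ℝ 1 Finv W := hTcd.mono interior_subset
  obtain ⟨U₀, hU₀, hU₀open, hpU₀⟩ := _root_.eventually_nhds_iff.mp hleft
  set ψ : ℝ → V := fun t => Finv (t, 0) with hψdef
  set h : ℝ → ℝ := fun t => f (ψ t) with hhdef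
  set s₀ : Set ℝ := {t : ℝ | ((t, (0:ℝ)) : ℝ × ℝ) ∈ W ∧ fderiv ℝ f (ψ t) = 0} with hs₀def
  have claim : ∀ t ∈ s₀, HasFDerivWithinAt h (0 : ℝ →L[ℝ] ℝ) s₀ t := by
    intro t ht
    have hFdiff : DifferentiableAt ℝ Finv (t, (0:ℝ)) :=
      (hWcd.differentiableOn one_ne_zero).differentiableAt (hWopen.mem_nhds ht.1)
    have hj : HasFDerivAt (fun t : ℝ => ((t, (0:ℝ)) : ℝ × ℝ))
        ((ContinuousLinearMap.id ℝ ℝ).prod 0) t :=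
      HasFDerivAt.prodMk (hasFDerivAt_id t) (hasFDerivAt_const (0:ℝ) t)
    have hψ' : HasFDerivAt ψ ((fderiv ℝ Finv (t, (0:ℝ))).comp
        ((ContinuousLinearMap.id ℝ ℝ).prod 0)) t := hFdiff.hasFDerivAt.comp t hj
    have hfd : HasFDerivAt f (fderiv ℝ f (ψ t)) (ψ t) :=
      ((hf.differentiable (by norm_num)) (ψ t)).hasFDerivAt
    have hcomp := hfd.comp t hψ'
    rw [ht.2, ContinuousLinearMap.zero_comp] at hcomp
    exact hcomp.hasFDerivWithinAt
  have hnull : volume (h '' s₀) = 0 := by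
    refine MeasureTheory.addHaar_image_eq_zero_of_det_fderivWithin_eq_zero
      (μ := volume) (f' := fun _ => (0 : ℝ →L[ℝ] ℝ)) claim (fun t _ => ?_)
    simp [ContinuousLinearMap.det, LinearMap.det_zero]
  refine ⟨U₀ ∩ H ⁻¹' W, Filter.inter_mem (hU₀open.mem_nhds hpU₀)
    (hH.continuousAt.preimage_mem_nhds hWnhds), ?_⟩
  refine measure_mono_null ?_ hnull
  rintro - ⟨z, ⟨hzC, hzU₀, hzW⟩, rfl⟩
  have hgz : g z = 0 := hzC
  have hφz : φ z = 0 := by rw [hφdef]; show g z w = 0; rw [hgz]; rfl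
  have hHz : H z = (ℓ z, (0:ℝ)) := by
    rw [hHdef]; show (ℓ z, φ z) = (ℓ z, (0:ℝ)); rw [hφz]
  have hψℓ : ψ (ℓ z) = z := by
    rw [hψdef]
    show Finv (ℓ z, (0:ℝ)) = z
    rw [← hHz]
    exact hU₀ z hzU₀
  refine ⟨ℓ z, ⟨?_, ?_⟩, ?_⟩
  · have : H z ∈ W := hzW
    rwa [hHz] at this
  · rw [hψℓ]; exact hzC
  · rw [hhdef]; show f (ψ (ℓ z)) = f z; rw [hψℓ]

/-- If `f : ℝ² → ℝ` is twice continuously differentiable, `E ⊆ ℝ²` is connected and the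
gradient of `f` vanishes at every point of `E`, then `f` is constant on `E`. -/
theorem constant_on_connected_critical_set (f : EuclideanSpace ℝ (Fin 2) → ℝ)
    (hf : ContDiff ℝ 2 f) (E : Set (EuclideanSpace ℝ (Fin 2)))
    (hconn : IsConnected E) (hE : ∀ p ∈ E, fderiv ℝ f p = 0) :
    ∀ x ∈ E, ∀ y ∈ E, f x = f y := by
  set C : Set V := {q | fderiv ℝ f q = 0} with hCdef
  set C₂ : Set V := {q ∈ C | fderiv ℝ (fderiv ℝ f) q = 0} with hC₂def
  set C₁ : Set V := {q ∈ C | fderiv ℝ (fderiv ℝ f) q ≠ 0} with hC₁def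
  have hnullC₂ : volume (f '' C₂) = 0 := by
    have hcover : C₂ = ⋃ n : ℕ, C₂ ∩ closedBall 0 n := by
      rw [← inter_iUnion]
      rw [iUnion_closedBall_nat]
      simp
    rw [hcover, image_iUnion]
    refine measure_iUnion_null fun n => ?_
    exact flat_part_null f hf n (Nat.cast_nonneg n) _ inter_subset_right
      (fun p hp => ⟨hp.1.1, hp.1.2⟩)
  have hnullC₁ : volume (f '' C₁) = 0 := by
    have hloc : ∀ p ∈ C₁, ∃ U : Set V, U ∈ nhds p ∧ volume (f '' (C ∩ U)) = 0 :=
      fun p hp => nonflat_local_null f hf p hp.2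
    classical
    choose U hU hUnull using hloc
    have hcov : ∀ p : C₁, True := fun _ => trivial
    have hmem : ∀ p ∈ C₁, (fun p => if hp : p ∈ C₁ then U p hp else univ) p ∈
        nhdsWithin p C₁ := by
      intro p hp
      simp only [dif_pos hp]
      exact mem_nhdsWithin_of_mem_nhds (hU p hp)
    obtain ⟨t, hts, htc, htcov⟩ := TopologicalSpace.countable_cover_nhdsWithin hmem
    refine measure_mono_null (t := ⋃ p ∈ t, f '' (C ∩ (if hp : p ∈ C₁ then U p hp else univ)))
        ?_ ?_
    · rintro - ⟨z, hz, rfl⟩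
      obtain ⟨p, hpt, hpz⟩ := mem_iUnion₂.1 (htcov hz)
      exact mem_iUnion₂.2 ⟨p, hpt, ⟨z, ⟨hz.1, hpz⟩, rfl⟩⟩
    · refine (measure_biUnion_null_iff htc).2 fun p hp => ?_
      rw [dif_pos (hts hp)]
      exact hUnull p (hts hp)
  have hnullE : volume (f '' E) = 0 := by
    have hsub : f '' E ⊆ f '' C₂ ∪ f '' C₁ := by
      rintro - ⟨z, hz, rfl⟩
      rcases eq_or_ne (fderiv ℝ (fderiv ℝ f) z) 0 with h0 | h0
      · exact Or.inl ⟨z, ⟨hE z hz, h0⟩, rfl⟩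
      · exact Or.inr ⟨z, ⟨hE z hz, h0⟩, rfl⟩
    refine measure_mono_null hsub ?_
    exact measure_union_null hnullC₂ hnullC₁
  -- conclude via connectedness
  have key : ∀ x ∈ E, ∀ y ∈ E, ¬ f x < f y := by
    intro x hx y hy hlt
    have himage : IsPreconnected (f '' E) :=
      (hconn.isPreconnected).image f hf.continuous.continuousOn
    have hord : OrdConnected (f '' E) := himage.ordConnected
    have hIcc : Icc (f x) (f y) ⊆ f '' E :=
      hord.out (mem_image_of_mem f hx) (mem_image_of_mem f hy)
    have : volume (Icc (f x) (f y)) = 0 := measure_mono_null hIcc hnullE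
    rw [Real.volume_Icc] at this
    simp only [ENNReal.ofReal_eq_zero] at this
    linarith
  intro x hx y hy
  rcases lt_trichotomy (f x) (f y) with h | h | h
  · exact absurd h (key x hx y hy)
  · exact h
  · exact absurd h (key y hy x hx)
end

section
/- Let (M, d) be a metric space, let p : [a, b] → M be a continuous path of finite length, and let f : M → ℝ. Suppose that f has gradient zero uniformly on the image p([a, b]): for every ε > 0 there exists δ > 0 such that for every q ∈ p([a, b]) and every z ∈ M with 0 < d(z, q) < δ, one has |f(z) − f(q)| ≤ ε·d(z, q). Then f ∘ p is constant on [a, b]. -/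
/-- If `p : [a, b] → M` is a continuous path of finite length and `f : M → ℝ` has gradient
zero uniformly on `p([a, b])`, then `f ∘ p` is constant on `[a, b]`. -/
theorem constant_along_finite_length_path {M : Type*} [MetricSpace M] (a b : ℝ) (hab : a ≤ b)
    (p : ℝ → M) (hcont : ContinuousOn p (Set.Icc a b))
    (hlen : ∃ L : ℝ, ∀ (n : ℕ) (x : Fin (n + 1) → ℝ), StrictMono x →
      x 0 = a → x (Fin.last n) = b →
      ∑ i : Fin n, dist (p (x i.castSucc)) (p (x i.succ)) ≤ L)
    (f : M → ℝ)
    (hgrad : ∀ ε > 0, ∃ δ > 0, ∀ q ∈ p '' Set.Icc a b, ∀ z : M,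
      0 < dist z q → dist z q < δ → |f z - f q| ≤ ε * dist z q) :
    ∀ x ∈ Set.Icc a b, ∀ y ∈ Set.Icc a b, f (p x) = f (p y) := by
  obtain ⟨L, hL⟩ := hlen
  intro x hx y hy
  have main : ∀ ε > 0, |f (p x) - f (p y)| ≤ ε * (|L| + 2) := by
    intro ε hε
    obtain ⟨δ₀, hδ₀, hgr⟩ := hgrad ε hε
    set δ : ℝ := min δ₀ 1 with hδdef
    have hδpos : 0 < δ := lt_min hδ₀ one_pos
    have hδle : δ ≤ δ₀ := min_le_left _ _
    have hδ1 : δ ≤ 1 := min_le_right _ _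
    rcases eq_or_lt_of_le hab with heq | hlt
    · have hxa : x = a := le_antisymm (heq ▸ hx.2) hx.1
      have hya : y = a := le_antisymm (heq ▸ hy.2) hy.1
      rw [hxa, hya, sub_self, abs_zero]
      positivity
    · have hba : 0 < b - a := sub_pos.2 hlt
      have hUC := isCompact_Icc.uniformContinuousOn_of_continuous hcont
      rw [Metric.uniformContinuousOn_iff] at hUC
      obtain ⟨η, hη, hUC⟩ := hUC δ hδpos
      obtain ⟨n, hn⟩ := exists_nat_gt ((b - a) / η)
      have hn0 : 0 < (n : ℝ) := lt_of_le_of_lt (by positivity) hn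
      set c : ℝ := (b - a) / n with hcdef
      have hc : 0 < c := div_pos hba hn0
      have hcη : c < η := by
        rw [hcdef, div_lt_iff₀ hn0]
        rw [div_lt_iff₀ hη] at hn
        nlinarith
      set v : ℕ → ℝ := fun k => a + k * c with hv
      have hvmono : StrictMono v := by
        intro i j hij
        have : (i : ℝ) < j := by exact_mod_cast hij
        simp only [hv]
        nlinarith
      have hvn : v n = b := by
        simp only [hv, hcdef]
        field_simp
        ring
      have hvmem : ∀ k, k ≤ n → v k ∈ Set.Icc a b := by
        intro k hk
        constructor
        · have : 0 ≤ (k : ℝ) * c := by positivity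
          simp only [hv]; linarith
        · rw [← hvn]
          exact hvmono.monotone hk
      have key : ∀ s ∈ Set.Icc a b, ∀ t ∈ Set.Icc a b, dist t s < η →
          |f (p t) - f (p s)| ≤ ε * dist (p t) (p s) ∧ dist (p t) (p s) < δ := by
        intro s hs t ht hd
        have hpd : dist (p t) (p s) < δ := hUC t ht s hs hd
        refine ⟨?_, hpd⟩
        rcases eq_or_lt_of_le (dist_nonneg (x := p t) (y := p s)) with h0 | h0
        · have : p t = p s := dist_eq_zero.mp h0.symm
          rw [this, sub_self, abs_zero]
          positivity
        · exact hgr (p s) ⟨s, hs, rfl⟩ (p t) h0 (lt_of_lt_of_le hpd hδle)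
      have hS : ∑ k ∈ Finset.range n, dist (p (v (k + 1))) (p (v k)) ≤ L := by
        have h := hL n (fun i : Fin (n + 1) => v i)
          (by intro i j hij; exact hvmono (by exact_mod_cast hij))
          (by simp [hv]) (by simpa [Fin.val_last] using hvn)
        rw [← Fin.sum_univ_eq_sum_range (fun k => dist (p (v (k + 1))) (p (v k))) n]
        refine le_trans (le_of_eq ?_) h
        apply Finset.sum_congr rfl
        intro i _
        simp [Fin.val_succ, dist_comm]
      have mid : ∀ i j : ℕ, i ≤ j → j ≤ n → |f (p (v j)) - f (p (v i))| ≤ ε * |L| := by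
        intro i j hij hjn
        have tele : f (p (v j)) - f (p (v i)) =
            ∑ k ∈ Finset.Ico i j, (f (p (v (k + 1))) - f (p (v k))) := by
          rw [Finset.sum_Ico_eq_sub _ hij, Finset.sum_range_sub (fun k => f (p (v k))),
            Finset.sum_range_sub (fun k => f (p (v k)))]
          ring
        rw [tele]
        calc |∑ k ∈ Finset.Ico i j, (f (p (v (k + 1))) - f (p (v k)))|
            ≤ ∑ k ∈ Finset.Ico i j, |f (p (v (k + 1))) - f (p (v k))| :=
              Finset.abs_sum_le_sum_abs _ _
          _ ≤ ∑ k ∈ Finset.Ico i j, ε * dist (p (v (k + 1))) (p (v k)) := by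
              apply Finset.sum_le_sum
              intro k hk
              have hk' : k + 1 ≤ n := le_trans (Finset.mem_Ico.mp hk).2 hjn
              have hdist : dist (v (k + 1)) (v k) < η := by
                rw [Real.dist_eq]
                have : v (k + 1) - v k = c := by
                  simp only [hv]; push_cast; ring
                rw [this, abs_of_pos hc]
                exact hcη
              exact (key (v k) (hvmem k (le_trans (Nat.le_succ k) hk'))
                (v (k + 1)) (hvmem (k + 1) hk') hdist).1
          _ ≤ ∑ k ∈ Finset.range n, ε * dist (p (v (k + 1))) (p (v k)) := by
              apply Finset.sum_le_sum_of_subset_of_nonneg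
              · intro k hk
                rw [Finset.mem_range]
                exact lt_of_lt_of_le (Finset.mem_Ico.mp hk).2 hjn
              · intro k _ _
                positivity
          _ = ε * ∑ k ∈ Finset.range n, dist (p (v (k + 1))) (p (v k)) := by
              rw [Finset.mul_sum]
          _ ≤ ε * L := mul_le_mul_of_nonneg_left hS hε.le
          _ ≤ ε * |L| := mul_le_mul_of_nonneg_left (le_abs_self L) hε.le
      have near : ∀ z ∈ Set.Icc a b, ∃ i ≤ n, dist z (v i) < η := by
        intro z hz
        set θ : ℝ := (z - a) / c with hθ
        have hθ0 : 0 ≤ θ := div_nonneg (by linarith [hz.1]) hc.le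
        have hzc : z - a = θ * c := by
          rw [hθ]; field_simp
        refine ⟨⌊θ⌋₊, ?_, ?_⟩
        · have hθn : θ ≤ n := by
            rw [hθ, div_le_iff₀ hc]
            have hnc : (n : ℝ) * c = b - a := by
              rw [hcdef]; field_simp
            linarith [hz.2]
          calc ⌊θ⌋₊ ≤ ⌊(n : ℝ)⌋₊ := Nat.floor_le_floor hθn
            _ = n := Nat.floor_natCast n
        · have h1 : (⌊θ⌋₊ : ℝ) ≤ θ := Nat.floor_le hθ0
          have h2 : θ < ⌊θ⌋₊ + 1 := Nat.lt_floor_add_one θ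
          have e1 : z - v ⌊θ⌋₊ = θ * c - ⌊θ⌋₊ * c := by
            simp only [hv]; linarith
          rw [Real.dist_eq, abs_of_nonneg (by nlinarith)]
          nlinarith
      obtain ⟨i, hi, hdxi⟩ := near x hx
      obtain ⟨j, hj, hdyj⟩ := near y hy
      have h1 := key (v i) (hvmem i hi) x hx hdxi
      have h2 := key (v j) (hvmem j hj) y hy hdyj
      have hb1 : |f (p x) - f (p (v i))| ≤ ε := by
        calc |f (p x) - f (p (v i))| ≤ ε * dist (p x) (p (v i)) := h1.1
          _ ≤ ε * 1 := mul_le_mul_of_nonneg_left (le_trans h1.2.le hδ1) hε.le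
          _ = ε := mul_one ε
      have hb2 : |f (p y) - f (p (v j))| ≤ ε := by
        calc |f (p y) - f (p (v j))| ≤ ε * dist (p y) (p (v j)) := h2.1
          _ ≤ ε * 1 := mul_le_mul_of_nonneg_left (le_trans h2.2.le hδ1) hε.le
          _ = ε := mul_one ε
      have hbm : |f (p (v i)) - f (p (v j))| ≤ ε * |L| := by
        rcases le_total i j with h | h
        · rw [abs_sub_comm]; exact mid i j h hj
        · exact mid j i h hi
      have t1 : |f (p x) - f (p y)| ≤
          |f (p x) - f (p (v i))| + |f (p (v i)) - f (p (v j))| + |f (p (v j)) - f (p y)| := by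
        calc |f (p x) - f (p y)| ≤ |f (p x) - f (p (v j))| + |f (p (v j)) - f (p y)| :=
              abs_sub_le _ _ _
          _ ≤ |f (p x) - f (p (v i))| + |f (p (v i)) - f (p (v j))| + |f (p (v j)) - f (p y)| := by
              linarith [abs_sub_le (f (p x)) (f (p (v i))) (f (p (v j)))]
      rw [abs_sub_comm (f (p y))] at hb2
      linarith
  have h0 : |f (p x) - f (p y)| ≤ 0 := by
    by_contra h
    push_neg at h
    have hL2 : (0 : ℝ) < |L| + 2 := by positivity
    have := main (|f (p x) - f (p y)| / (2 * (|L| + 2))) (by positivity)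
    have he : |f (p x) - f (p y)| / (2 * (|L| + 2)) * (|L| + 2) = |f (p x) - f (p y)| / 2 := by
      field_simp
    rw [he] at this
    linarith
  have := le_antisymm h0 (abs_nonneg _)
  have := abs_eq_zero.mp this
  linarith
end

section
/- Let f : [a, b] → ℝ be continuous, and let k ≥ 0. Suppose that at every point p ∈ (a, b), limsup_{x → p} |f(x) − f(p)|/|x − p| ≤ k, i.e. for every ε > 0 there exists δ > 0 such that |f(x) − f(p)| ≤ (k + ε)·|x − p| whenever x ∈ [a, b] and |x − p| < δ. Then f is Lipschitz with constant k on [a, b]: |f(x) − f(y)| ≤ k·|x − y| for all x, y ∈ [a, b]. -/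
/-- A continuous function on `[a, b]` whose upper pointwise Lipschitz constant is at most `k`
at every interior point is Lipschitz with constant `k` on `[a, b]`. -/
theorem lipschitz_of_limsup_slope_le (a b k : ℝ) (hab : a < b) (hk : 0 ≤ k) (f : ℝ → ℝ)
    (hcont : ContinuousOn f (Set.Icc a b))
    (hslope : ∀ p ∈ Set.Ioo a b, ∀ ε > 0, ∃ δ > 0, ∀ x ∈ Set.Icc a b,
      |x - p| < δ → |f x - f p| ≤ (k + ε) * |x - p|) :
    ∀ x ∈ Set.Icc a b, ∀ y ∈ Set.Icc a b, |f x - f y| ≤ k * |x - y| := by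
  have hkε : ∀ ε : ℝ, 0 < ε → 0 ≤ k + ε := fun ε hε => by linarith
  have key : ∀ ε > 0, ∀ x ∈ Set.Icc a b, ∀ y ∈ Set.Icc a b, x ≤ y →
      |f y - f x| ≤ (k + ε) * (y - x) + ε := by
    intro ε hε x hx y hy hxy
    set S : Set ℝ := Set.Icc x y ∩ (fun t => |f t - f x| - (k + ε) * (t - x)) ⁻¹' Set.Iic ε
      with hSdef
    have hxyab : Set.Icc x y ⊆ Set.Icc a b := Set.Icc_subset_Icc hx.1 hy.2
    have hSmem : ∀ t, t ∈ S ↔ t ∈ Set.Icc x y ∧ |f t - f x| ≤ (k + ε) * (t - x) + ε := by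
      intro t
      simp only [hSdef, Set.mem_inter_iff, Set.mem_preimage, Set.mem_Iic, sub_le_iff_le_add,
        add_comm]
    have hSclosed : IsClosed S := by
      apply ContinuousOn.preimage_isClosed_of_isClosed _ isClosed_Icc isClosed_Iic
      apply ContinuousOn.sub
      · exact ((hcont.mono hxyab).sub continuousOn_const).abs
      · exact (continuousOn_const.mul (continuousOn_id.sub continuousOn_const))
    have hxS : x ∈ S := by
      rw [hSmem]
      refine ⟨⟨le_refl x, hxy⟩, ?_⟩
      simp only [sub_self, abs_zero, mul_zero]
      linarith
    have hSne : S.Nonempty := ⟨x, hxS⟩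
    have hSbdd : BddAbove S := ⟨y, fun t ht => ((hSmem t).1 ht).1.2⟩
    set c := sSup S with hc
    have hcS : c ∈ S := hSclosed.csSup_mem hSne hSbdd
    have hcS' := (hSmem c).1 hcS
    have hcx : x ≤ c := hcS'.1.1
    have hcy : c ≤ y := hcS'.1.2
    have hcab : c ∈ Set.Icc a b := hxyab hcS'.1
    -- show c = y
    rcases eq_or_lt_of_le hcy with hcyeq | hcylt
    · have := hcS'.2
      rw [hcyeq] at this
      exact this
    · exfalso
      -- first: a < c
      have hac : a < c := by
        rcases lt_or_eq_of_le hx.1 with h | h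
        · exact lt_of_lt_of_le h hcx
        · -- x = a; use continuity at x to find a point of S above x
          have hconta : ContinuousWithinAt f (Set.Icc a b) x := hcont x hx
          have := Metric.tendsto_nhdsWithin_nhds.1 hconta ε hε
          obtain ⟨δ, hδ, hδ'⟩ := this
          set t := min (x + δ / 2) y with ht
          have htx : x < t := lt_min (by linarith) (lt_of_le_of_lt hcx hcylt)
          have hty : t ≤ y := min_le_right _ _
          have htab : t ∈ Set.Icc a b := ⟨hx.1.trans (le_of_lt htx), hty.trans hy.2⟩
          have htd : dist t x < δ := by
            rw [Real.dist_eq, abs_of_pos (by linarith)]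
            have : t ≤ x + δ / 2 := min_le_left _ _
            linarith
          have hft : dist (f t) (f x) < ε := hδ' htab htd
          have htS : t ∈ S := by
            rw [hSmem]
            refine ⟨⟨le_of_lt htx, hty⟩, ?_⟩
            have h1 : |f t - f x| < ε := by rwa [Real.dist_eq] at hft
            have h2 : 0 ≤ (k + ε) * (t - x) :=
              mul_nonneg (hkε ε hε) (by linarith)
            linarith
          have : t ≤ c := le_csSup hSbdd htS
          rw [h]; linarith
      have hcIoo : c ∈ Set.Ioo a b := ⟨hac, lt_of_lt_of_le hcylt hy.2⟩
      obtain ⟨δ, hδ, hδ'⟩ := hslope c hcIoo ε hε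
      set t := min (c + δ / 2) y with ht
      have htc : c < t := lt_min (by linarith) hcylt
      have hty : t ≤ y := min_le_right _ _
      have htab : t ∈ Set.Icc a b := ⟨hcab.1.trans (le_of_lt htc), hty.trans hy.2⟩
      have htd : |t - c| < δ := by
        rw [abs_of_pos (by linarith)]
        have : t ≤ c + δ / 2 := min_le_left _ _
        linarith
      have hft : |f t - f c| ≤ (k + ε) * |t - c| := hδ' t htab htd
      rw [abs_of_pos (by linarith : (0:ℝ) < t - c)] at hft
      have htS : t ∈ S := by
        rw [hSmem]
        refine ⟨⟨hcx.trans (le_of_lt htc), hty⟩, ?_⟩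
        calc |f t - f x| ≤ |f t - f c| + |f c - f x| := abs_sub_le _ _ _
          _ ≤ (k + ε) * (t - c) + ((k + ε) * (c - x) + ε) := add_le_add hft hcS'.2
          _ = (k + ε) * (t - x) + ε := by ring
      have : t ≤ c := le_csSup hSbdd htS
      linarith
  -- symmetrize and take ε → 0
  have main : ∀ x ∈ Set.Icc a b, ∀ y ∈ Set.Icc a b, x ≤ y →
      |f y - f x| ≤ k * (y - x) := by
    intro x hx y hy hxy
    apply le_of_forall_pos_le_add
    intro ε' hε'
    set ε := ε' / (y - x + 1) with hεdef
    have hden : 0 < y - x + 1 := by linarith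
    have hε : 0 < ε := div_pos hε' hden
    have := key ε hε x hx y hy hxy
    have heq : (k + ε) * (y - x) + ε = k * (y - x) + ε * (y - x + 1) := by ring
    rw [heq] at this
    rw [hεdef, div_mul_cancel₀ _ (ne_of_gt hden)] at this
    exact this
  intro x hx y hy
  rcases le_total x y with h | h
  · rw [abs_sub_comm (f x) (f y), abs_sub_comm x y, abs_of_nonneg (by linarith : (0:ℝ) ≤ y - x)]
    exact main x hx y hy h
  · rw [abs_of_nonneg (by linarith : (0:ℝ) ≤ x - y)]
    exact main y hy x hx h
end

section
/- Let f : [a, b] → ℝ be continuous, let k ≥ 0, and suppose that at every point p ∈ (a, b), limsup_{x → p} |f(x) − f(p)|/|x − p| ≤ k. If r is a real number with |r| > k, then the function g(x) = f(x) + r·x has no local maximum and no local minimum at any point of the open interval (a, b). -/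
/-- If `f` is continuous on `[a, b]` with upper pointwise Lipschitz constant at most `k` at
every interior point, and `|r| > k`, then `x ↦ f x + r * x` has no local maximum and no
local minimum at any point of `(a, b)`. -/
theorem no_local_extrema_of_tilt (a b k r : ℝ) (hab : a < b) (hk : 0 ≤ k) (hr : k < |r|)
    (f : ℝ → ℝ) (hcont : ContinuousOn f (Set.Icc a b))
    (hslope : ∀ p ∈ Set.Ioo a b, ∀ ε > 0, ∃ δ > 0, ∀ x ∈ Set.Icc a b,
      |x - p| < δ → |f x - f p| ≤ (k + ε) * |x - p|) :
    ∀ p ∈ Set.Ioo a b, ¬ IsLocalMaxOn (fun x => f x + r * x) (Set.Icc a b) p ∧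
      ¬ IsLocalMinOn (fun x => f x + r * x) (Set.Icc a b) p := by
  intro p hp
  obtain ⟨hap, hpb⟩ := hp
  have hε : 0 < (|r| - k) / 2 := by linarith
  obtain ⟨δ, hδ, H⟩ := hslope p ⟨hap, hpb⟩ ((|r| - k) / 2) hε
  set s : ℝ := if 0 < r then 1 else -1 with hs
  have hrs : r * s = |r| := by
    rw [hs]; split_ifs with h
    · rw [abs_of_pos h]; ring
    · rw [abs_of_nonpos (not_lt.1 h)]; ring
  have hs1 : |s| = 1 := by rw [hs]; split_ifs <;> norm_num
  have key : ∀ t > 0, ∃ x ∈ Set.Icc a b, |x - p| < t ∧ f p + r * p < f x + r * x ∧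
      ∃ y ∈ Set.Icc a b, |y - p| < t ∧ f y + r * y < f p + r * p := by
    intro t ht
    set d := min t (min δ (min (b - p) (p - a))) / 2 with hd
    have h1 : min t (min δ (min (b - p) (p - a))) ≤ t := min_le_left _ _
    have h2 : min t (min δ (min (b - p) (p - a))) ≤ δ :=
      le_trans (min_le_right _ _) (min_le_left _ _)
    have h3 : min t (min δ (min (b - p) (p - a))) ≤ b - p :=
      le_trans (min_le_right _ _) (le_trans (min_le_right _ _) (min_le_left _ _))
    have h4 : min t (min δ (min (b - p) (p - a))) ≤ p - a :=
      le_trans (min_le_right _ _) (le_trans (min_le_right _ _) (min_le_right _ _))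
    have hd0 : 0 < d := by
      apply div_pos _ (by norm_num : (0:ℝ) < 2)
      exact lt_min ht (lt_min hδ (lt_min (by linarith) (by linarith)))
    have hdt : d < t := by rw [hd]; linarith
    have hdδ : d < δ := by rw [hd]; linarith
    have hdb : d ≤ b - p := by rw [hd]; linarith
    have hda : d ≤ p - a := by rw [hd]; linarith
    have hsd : |s * d| = d := by rw [abs_mul, hs1, one_mul, abs_of_pos hd0]
    have hsd' := abs_le.1 hsd.le
    have hxmem : p + s * d ∈ Set.Icc a b := ⟨by linarith [hsd'.1], by linarith [hsd'.2]⟩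
    have hymem : p - s * d ∈ Set.Icc a b := ⟨by linarith [hsd'.2], by linarith [hsd'.1]⟩
    have hxd : |p + s * d - p| = d := by rw [add_sub_cancel_left, hsd]
    have hyd : |p - s * d - p| = d := by
      rw [sub_sub_cancel_left, abs_neg, hsd]
    have hfx := H (p + s * d) hxmem (by rw [hxd]; exact hdδ)
    have hfy := H (p - s * d) hymem (by rw [hyd]; exact hdδ)
    rw [hxd] at hfx
    rw [hyd] at hfy
    have hfx' := abs_le.1 hfx
    have hfy' := abs_le.1 hfy
    refine ⟨p + s * d, hxmem, by rw [hxd]; exact hdt, ?_,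
      p - s * d, hymem, by rw [hyd]; exact hdt, ?_⟩
    · have : r * (p + s * d) = r * p + |r| * d := by rw [mul_add, ← mul_assoc, hrs]
      nlinarith [hfx'.1]
    · have : r * (p - s * d) = r * p - |r| * d := by rw [mul_sub, ← mul_assoc, hrs]
      nlinarith [hfy'.2]
  constructor
  · intro hmax
    obtain ⟨t, ht, hball⟩ := Metric.mem_nhdsWithin_iff.1 hmax
    obtain ⟨x, hxm, hxd, hgx, -⟩ := key t ht
    have : (fun x => f x + r * x) x ≤ f p + r * p :=
      hball ⟨by rwa [Metric.mem_ball, Real.dist_eq], hxm⟩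
    simp only at this
    linarith
  · intro hmin
    obtain ⟨t, ht, hball⟩ := Metric.mem_nhdsWithin_iff.1 hmin
    obtain ⟨x, hxm, hxd, hgx, y, hym, hyd, hgy⟩ := key t ht
    have : f p + r * p ≤ (fun x => f x + r * x) y :=
      hball ⟨by rwa [Metric.mem_ball, Real.dist_eq], hym⟩
    simp only at this
    linarith
end

section
/- Let (M, d) be a metric space, let p : [a, b] → M be a 1-Lipschitz map, let f : M → ℝ, and let k ≥ 0. Suppose that at every point q ∈ p([a, b]), limsup_{z → q} |f(z) − f(q)|/d(z, q) ≤ k. Then f ∘ p is Lipschitz with constant k on [a, b]; in particular |f(p(b)) − f(p(a))| ≤ k·(b − a). -/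
/-- If `p : [a, b] → M` is a nice (1-Lipschitz) curve and `f : M → ℝ` satisfies
`limsup_{z → q} |f z - f q| / d(z, q) ≤ k` at every point `q ∈ p([a, b])`, then `f ∘ p` is
Lipschitz with constant `k` on `[a, b]`; in particular `|f (p b) - f (p a)| ≤ k * (b - a)`. -/
theorem lipschitz_along_nice_curve {M : Type*} [MetricSpace M] (a b : ℝ) (hab : a ≤ b)
    (p : ℝ → M)
    (hp : ∀ x ∈ Set.Icc a b, ∀ y ∈ Set.Icc a b, dist (p x) (p y) ≤ |x - y|)
    (f : M → ℝ) (k : ℝ) (hk : 0 ≤ k)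
    (hslope : ∀ q ∈ p '' Set.Icc a b, ∀ ε > 0, ∃ δ > 0, ∀ z : M,
      dist z q < δ → |f z - f q| ≤ (k + ε) * dist z q) :
    (∀ x ∈ Set.Icc a b, ∀ y ∈ Set.Icc a b, |f (p x) - f (p y)| ≤ k * |x - y|) ∧
      |f (p b) - f (p a)| ≤ k * (b - a) := by
  have key : ∀ ε > 0, ∀ x ∈ Set.Icc a b, ∀ y ∈ Set.Icc a b, x ≤ y →
      |f (p y) - f (p x)| ≤ (k + ε) * (y - x) := by
    intro ε hε x hx y hy hxy
    set S : Set ℝ := {t | t ∈ Set.Icc x y ∧ |f (p t) - f (p x)| ≤ (k + ε) * (t - x)} with hS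
    have hxS : x ∈ S := ⟨⟨le_refl x, hxy⟩, by simp⟩
    have hSne : S.Nonempty := ⟨x, hxS⟩
    have hSbdd : BddAbove S := ⟨y, fun t ht => ht.1.2⟩
    set c := sSup S with hc
    have hcx : x ≤ c := le_csSup hSbdd hxS
    have hcy : c ≤ y := csSup_le hSne (fun t ht => ht.1.2)
    have hcab : c ∈ Set.Icc a b := ⟨hx.1.trans hcx, hcy.trans hy.2⟩
    obtain ⟨δ, hδ, hq⟩ := hslope (p c) ⟨c, hcab, rfl⟩ ε hε
    have hkε : (0:ℝ) ≤ k + ε := by linarith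
    -- c ∈ S
    have hcmem : c ∈ S := by
      obtain ⟨t, htS, htc⟩ := exists_lt_of_lt_csSup hSne (show c - δ < c by linarith)
      have htle : t ≤ c := le_csSup hSbdd htS
      have htab : t ∈ Set.Icc a b := ⟨hx.1.trans htS.1.1, htS.1.2.trans hy.2⟩
      have hdist : dist (p t) (p c) < δ := by
        calc dist (p t) (p c) ≤ |t - c| := hp t htab c hcab
        _ = c - t := by rw [abs_sub_comm, abs_of_nonneg (by linarith)]
        _ < δ := by linarith
      have h1 : |f (p t) - f (p c)| ≤ (k + ε) * (c - t) := by
        calc |f (p t) - f (p c)| ≤ (k + ε) * dist (p t) (p c) := hq _ hdist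
        _ ≤ (k + ε) * (c - t) := by
            apply mul_le_mul_of_nonneg_left _ hkε
            calc dist (p t) (p c) ≤ |t - c| := hp t htab c hcab
            _ = c - t := by rw [abs_sub_comm, abs_of_nonneg (by linarith)]
      refine ⟨⟨hcx, hcy⟩, ?_⟩
      calc |f (p c) - f (p x)| ≤ |f (p c) - f (p t)| + |f (p t) - f (p x)| := abs_sub_le _ _ _
      _ ≤ (k + ε) * (c - t) + (k + ε) * (t - x) := by
          rw [abs_sub_comm] at h1; exact add_le_add h1 htS.2
      _ = (k + ε) * (c - x) := by ring
    -- c = y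
    have hcey : c = y := by
      by_contra hne
      have hclt : c < y := lt_of_le_of_ne hcy hne
      set t' := min y (c + δ / 2) with ht'
      have ht'c : c < t' := lt_min hclt (by linarith)
      have ht'y : t' ≤ y := min_le_left _ _
      have ht'ab : t' ∈ Set.Icc a b := ⟨hx.1.trans (hcx.trans ht'c.le), ht'y.trans hy.2⟩
      have hdist : dist (p t') (p c) < δ := by
        calc dist (p t') (p c) ≤ |t' - c| := hp t' ht'ab c hcab
        _ = t' - c := abs_of_nonneg (by linarith)
        _ ≤ δ / 2 := by
            have := min_le_right y (c + δ / 2); linarith [this]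
        _ < δ := by linarith
      have h1 : |f (p t') - f (p c)| ≤ (k + ε) * (t' - c) := by
        calc |f (p t') - f (p c)| ≤ (k + ε) * dist (p t') (p c) := hq _ hdist
        _ ≤ (k + ε) * (t' - c) := by
            apply mul_le_mul_of_nonneg_left _ hkε
            calc dist (p t') (p c) ≤ |t' - c| := hp t' ht'ab c hcab
            _ = t' - c := abs_of_nonneg (by linarith)
      have ht'S : t' ∈ S := by
        refine ⟨⟨hcx.trans ht'c.le, ht'y⟩, ?_⟩
        calc |f (p t') - f (p x)| ≤ |f (p t') - f (p c)| + |f (p c) - f (p x)| :=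
              abs_sub_le _ _ _
        _ ≤ (k + ε) * (t' - c) + (k + ε) * (c - x) := add_le_add h1 hcmem.2
        _ = (k + ε) * (t' - x) := by ring
      exact absurd (le_csSup hSbdd ht'S) (not_le.mpr ht'c)
    have := hcmem.2
    rwa [hcey] at this
  have main : ∀ x ∈ Set.Icc a b, ∀ y ∈ Set.Icc a b, x ≤ y →
      |f (p y) - f (p x)| ≤ k * (y - x) := by
    intro x hx y hy hxy
    refine le_of_forall_pos_le_add ?_
    intro η hη
    have hε : (0:ℝ) < η / (y - x + 1) := div_pos hη (by linarith)
    have h := key _ hε x hx y hy hxy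
    have hyx : (0:ℝ) ≤ y - x := by linarith
    have : η / (y - x + 1) * (y - x) ≤ η := by
      rw [div_mul_eq_mul_div, div_le_iff₀ (by linarith)]
      nlinarith
    nlinarith [h]
  constructor
  · intro x hx y hy
    rcases le_total x y with h | h
    · rw [abs_sub_comm, abs_sub_comm x y, abs_of_nonneg (by linarith : (0:ℝ) ≤ y - x)]
      exact main x hx y hy h
    · rw [abs_of_nonneg (by linarith : (0:ℝ) ≤ x - y)]
      exact main y hy x hx h
  · have := main a ⟨le_refl a, hab⟩ b ⟨hab, le_refl b⟩ hab
    exact this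
end

section
/- Let (M, d) be a metric space, let p : [a, b] → M be a continuous path of finite length ℓ, let f : M → ℝ, and let k ≥ 0. Suppose that limsup_{z → q} |f(z) − f(q)|/d(z, q) ≤ k holds uniformly on p([a, b]): for every ε > 0 there exists δ > 0 such that for every q ∈ p([a, b]) and every z ∈ M with d(z, q) < δ, one has |f(z) − f(q)| ≤ (k + ε)·d(z, q). Then the path f ∘ p : [a, b] → ℝ has finite length at most k·ℓ: for every partition a = x₀ < ⋯ < xₙ = b, Σ_{i=0}^{n−1} |f(p(xᵢ₊₁)) − f(p(xᵢ))| ≤ k·ℓ. -/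
namespace LenComp

/-- Sum of `g` over consecutive pairs of a list. -/
noncomputable def csum (g : ℝ → ℝ → ℝ) : List ℝ → ℝ
  | s :: t :: r => g s t + csum g (t :: r)
  | _ => 0

lemma csum_cons_cons (g : ℝ → ℝ → ℝ) (s t : ℝ) (r : List ℝ) :
    csum g (s :: t :: r) = g s t + csum g (t :: r) := rfl

lemma csum_cons_ofFn (g : ℝ → ℝ → ℝ) (x₀ : ℝ) {m : ℕ} (z : Fin (m + 1) → ℝ) :
    csum g (x₀ :: List.ofFn z) = g x₀ (z 0) + csum g (List.ofFn z) := by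
  rw [List.ofFn_succ, csum_cons_cons]

lemma csum_ofFn (g : ℝ → ℝ → ℝ) : ∀ (n : ℕ) (x : Fin (n + 1) → ℝ),
    csum g (List.ofFn x) = ∑ i : Fin n, g (x i.castSucc) (x i.succ) := by
  intro n
  induction n with
  | zero => intro x; simp [csum]
  | succ m ih =>
    intro x
    rw [List.ofFn_succ, csum_cons_ofFn, ih (fun i => x i.succ), Fin.sum_univ_succ]
    simp [Fin.succ_castSucc, -Fin.castSucc_succ]

lemma csum_append (g : ℝ → ℝ → ℝ) (y : ℝ) (l₂ : List ℝ) :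
    ∀ (x : ℝ) (l₁ : List ℝ),
    csum g ((x :: l₁) ++ (y :: l₂)) =
      csum g (x :: l₁) + g ((x :: l₁).getLast (by simp)) y + csum g (y :: l₂) := by
  intro x l₁
  induction l₁ generalizing x with
  | nil => simp [csum_cons_cons, csum]
  | cons z r ih =>
    have : ((x :: z :: r) ++ (y :: l₂)) = x :: ((z :: r) ++ (y :: l₂)) := by simp
    rw [this, List.cons_append, csum_cons_cons, ← List.cons_append, ih z,
      csum_cons_cons]
    have hgl : (x :: z :: r).getLast (by simp) = (z :: r).getLast (by simp) := by
      simp [List.getLast]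
    rw [hgl]; ring

/-- triangle-type bound: `g head last ≤ csum g l`. -/
lemma head_last_le (g : ℝ → ℝ → ℝ) (hg0 : ∀ u, g u u ≤ 0)
    (htri : ∀ u v w, g u w ≤ g u v + g v w) :
    ∀ (l : List ℝ) (x : ℝ), g x ((x :: l).getLast (by simp)) ≤ csum g (x :: l) := by
  intro l
  induction l with
  | nil => intro x; simpa [csum] using hg0 x
  | cons z r ih =>
    intro x
    have h1 : g x ((x :: z :: r).getLast (by simp)) ≤
        g x z + g z ((z :: r).getLast (by simp)) := by
      have : (x :: z :: r).getLast (by simp) = (z :: r).getLast (by simp) := by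
        simp [List.getLast]
      rw [this]; exact htri _ _ _
    calc g x ((x :: z :: r).getLast (by simp)) ≤ g x z + g z ((z :: r).getLast (by simp)) := h1
      _ ≤ g x z + csum g (z :: r) := by linarith [ih z]
      _ = csum g (x :: z :: r) := (csum_cons_cons g x z r).symm

lemma csum_mono (g₁ g₂ : ℝ → ℝ → ℝ) :
    ∀ (l : List ℝ), l.Chain' (fun u v => g₁ u v ≤ g₂ u v) → csum g₁ l ≤ csum g₂ l := by
  intro l
  induction l with
  | nil => intro _; simp [csum]
  | cons x r ih =>
    intro h
    cases r with
    | nil => simp [csum]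
    | cons z r' =>
      rw [List.Chain', List.isChain_cons_cons] at h
      rw [csum_cons_cons, csum_cons_cons]
      exact add_le_add h.1 (ih h.2)

lemma csum_const_mul (c : ℝ) (g : ℝ → ℝ → ℝ) :
    ∀ (l : List ℝ), csum (fun u v => c * g u v) l = c * csum g l := by
  intro l
  induction l with
  | nil => simp [csum]
  | cons x r ih =>
    cases r with
    | nil => simp [csum]
    | cons z r' => rw [csum_cons_cons, csum_cons_cons, ih]; ring

noncomputable def seg (N : ℕ) (s t : ℝ) : List ℝ :=
  List.ofFn (fun j : Fin N => s + j * (t - s) / N)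

noncomputable def refine (N : ℕ) : List ℝ → List ℝ
  | [] => []
  | [x] => [x]
  | s :: t :: r => seg N s t ++ refine N (t :: r)

lemma refine_singleton (N : ℕ) (x : ℝ) : refine N [x] = [x] := rfl
lemma refine_cons_cons (N : ℕ) (s t : ℝ) (r : List ℝ) :
    refine N (s :: t :: r) = seg N s t ++ refine N (t :: r) := rfl

lemma seg_ne_nil {N : ℕ} (hN : 1 ≤ N) (s t : ℝ) : seg N s t ≠ [] := by
  simp [seg, List.ofFn_eq_nil_iff]; omega

lemma seg_head {N : ℕ} (hN : 1 ≤ N) (s t : ℝ) : (seg N s t).head? = some s := by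
  obtain ⟨m, rfl⟩ : ∃ m, N = m + 1 := ⟨N - 1, by omega⟩
  rw [seg, List.ofFn_succ]
  simp

lemma seg_getLast? (N : ℕ) (hN : 1 ≤ N) (s t : ℝ) :
    (seg N s t).getLast? = some (s + (N - 1 : ℕ) * (t - s) / N) := by
  have h : seg N s t ≠ [] := seg_ne_nil hN s t
  rw [List.getLast?_eq_getLast h]
  congr 1
  unfold seg at h ⊢
  rw [List.getLast_ofFn]

lemma refine_ne_nil {N : ℕ} (hN : 1 ≤ N) : ∀ l : List ℝ, l ≠ [] → refine N l ≠ [] := by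
  intro l hl
  match l with
  | [x] => simp [refine_singleton]
  | s :: t :: r =>
    rw [refine_cons_cons]
    simp [seg_ne_nil hN]

lemma refine_head {N : ℕ} (hN : 1 ≤ N) : ∀ l : List ℝ, (refine N l).head? = l.head? := by
  intro l
  match l with
  | [] => rfl
  | [x] => rfl
  | s :: t :: r =>
    rw [refine_cons_cons, List.head?_append_of_ne_nil _ (seg_ne_nil hN s t)]
    rw [seg_head hN]; rfl

lemma refine_getLast {N : ℕ} (hN : 1 ≤ N) : ∀ l : List ℝ, (refine N l).getLast? = l.getLast? := by
  intro l
  match l with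
  | [] => rfl
  | [x] => rfl
  | s :: t :: r =>
    rw [refine_cons_cons, List.getLast?_append_of_ne_nil (l₁ := seg N s t)
        (refine_ne_nil hN (t :: r) (by simp)),
      refine_getLast hN (t :: r)]
    exact (List.getLast?_cons_cons).symm

lemma arith_pt {N : ℕ} (hN : 1 ≤ N) {a b s t : ℝ} (hst : s < t) (has : a ≤ s) (htb : t ≤ b)
    (i j : ℕ) (hij : j = i + 1) (hjN : j ≤ N) :
    s + i * (t - s) / N < s + j * (t - s) / N ∧ a ≤ s + i * (t - s) / N ∧
      s + j * (t - s) / N ≤ b ∧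
      (s + j * (t - s) / N) - (s + i * (t - s) / N) ≤ (b - a) / N := by
  have hN0 : (0 : ℝ) < N := by exact_mod_cast Nat.lt_of_lt_of_le Nat.zero_lt_one hN
  have hc : 0 < (t - s) / N := div_pos (by linarith) hN0
  have hj : (j : ℝ) = i + 1 := by exact_mod_cast congrArg (Nat.cast (R := ℝ)) hij
  have hjc : (j : ℝ) * (t - s) / N = i * (t - s) / N + (t - s) / N := by
    rw [hj]; ring
  have hic : 0 ≤ (i : ℝ) * (t - s) / N := by
    apply div_nonneg _ hN0.le
    exact mul_nonneg (Nat.cast_nonneg i) (by linarith)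
  have hjN' : (j : ℝ) ≤ N := by exact_mod_cast hjN
  have h3 : (j : ℝ) * (t - s) / N ≤ t - s := by
    rw [div_le_iff₀ hN0]
    nlinarith
  have h4 : (t - s) / N ≤ (b - a) / N := by gcongr <;> linarith
  refine ⟨by linarith, by linarith, by linarith, by linarith⟩

lemma seg_chain {N : ℕ} (hN : 1 ≤ N) {a b s t : ℝ} (hst : s < t) (has : a ≤ s) (htb : t ≤ b) :
    (seg N s t).Chain' (fun u v => u < v ∧ a ≤ u ∧ v ≤ b ∧ v - u ≤ (b - a) / N) := by
  rw [List.Chain', List.isChain_iff_getElem]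
  intro i hi
  unfold seg at hi ⊢
  rw [List.length_ofFn] at hi
  rw [List.getElem_ofFn, List.getElem_ofFn]
  exact arith_pt hN hst has htb i (i + 1) rfl (by omega)

lemma refine_chain {N : ℕ} (hN : 1 ≤ N) {a b : ℝ} :
    ∀ l : List ℝ, l.Chain' (fun u v => u < v ∧ a ≤ u ∧ v ≤ b) →
      (refine N l).Chain' (fun u v => u < v ∧ a ≤ u ∧ v ≤ b ∧ v - u ≤ (b - a) / N) := by
  intro l hl
  match l with
  | [] => simp [refine, List.Chain']
  | [x] => simp [refine_singleton, List.Chain']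
  | s :: t :: r =>
    rw [List.Chain', List.isChain_cons_cons] at hl
    obtain ⟨⟨hst, has, htb⟩, hl2⟩ := hl
    rw [refine_cons_cons, List.Chain', List.isChain_append]
    refine ⟨seg_chain hN hst has htb, refine_chain hN (t :: r) hl2, ?_⟩
    intro u hu v hv
    rw [seg_getLast? N hN s t] at hu
    rw [refine_head hN] at hv
    simp only [List.head?_cons, Option.mem_def, Option.some_inj] at hu hv
    subst hu; subst hv
    have := arith_pt hN hst has htb (N - 1) N (by omega) le_rfl
    have hNt : s + (N : ℕ) * (t - s) / N = t := by
      have hN0 : (N : ℝ) ≠ 0 := by positivity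
      field_simp
      ring
    rw [hNt] at this
    exact ⟨this.1, this.2.1, htb, this.2.2.2⟩

lemma csum_le_refine (g : ℝ → ℝ → ℝ) (hg0 : ∀ u, g u u ≤ 0)
    (htri : ∀ u v w, g u w ≤ g u v + g v w) {N : ℕ} (hN : 1 ≤ N) :
    ∀ l : List ℝ, csum g l ≤ csum g (refine N l) := by
  intro l
  match l with
  | [] => simp [refine]
  | [x] => simp [refine_singleton]
  | s :: t :: r =>
    rw [refine_cons_cons, csum_cons_cons]
    -- destructure seg and refine (t :: r)
    obtain ⟨mid, hseg⟩ : ∃ mid, seg N s t = s :: mid := by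
      have h1 := seg_head hN s t
      cases hseg : seg N s t with
      | nil => exact absurd hseg (seg_ne_nil hN s t)
      | cons u mid =>
        rw [hseg] at h1
        simp only [List.head?_cons, Option.some_inj] at h1
        exact ⟨mid, by rw [h1]⟩
    obtain ⟨rest, hrest⟩ : ∃ rest, refine N (t :: r) = t :: rest := by
      have h1 := refine_head hN (t :: r)
      cases hre : refine N (t :: r) with
      | nil => exact absurd hre (refine_ne_nil hN (t :: r) (by simp))
      | cons u rest =>
        rw [hre] at h1
        simp only [List.head?_cons, Option.some_inj] at h1
        exact ⟨rest, by rw [h1]⟩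
    rw [hseg, hrest, csum_append g t rest s mid]
    have h1 : g s t ≤ csum g (s :: mid) + g ((s :: mid).getLast (by simp)) t := by
      have h2 := head_last_le g hg0 htri mid s
      have h3 := htri s ((s :: mid).getLast (by simp)) t
      linarith
    have h2 : csum g (t :: r) ≤ csum g (t :: rest) := by
      have := csum_le_refine g hg0 htri hN (t :: r)
      rwa [hrest] at this
    linarith


/-- bridge 1: a strict partition gives a nice list -/
lemma ofFn_chain {a b : ℝ} {n : ℕ} {x : Fin (n + 1) → ℝ} (hx : StrictMono x)
    (h0 : x 0 = a) (hl : x (Fin.last n) = b) :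
    (List.ofFn x).Chain' (fun u v => u < v ∧ a ≤ u ∧ v ≤ b) := by
  rw [List.Chain', List.isChain_iff_getElem]
  intro i hi
  rw [List.length_ofFn] at hi
  rw [List.getElem_ofFn, List.getElem_ofFn]
  have hmono := hx.monotone
  refine ⟨hx ?_, ?_, ?_⟩
  · rw [Fin.lt_def]
    simp only [Fin.coe_cast]
    omega
  · rw [← h0]; exact hmono (Fin.zero_le _)
  · rw [← hl]; exact hmono (Fin.le_last _)

lemma ofFn_head? {n : ℕ} (x : Fin (n + 1) → ℝ) : (List.ofFn x).head? = some (x 0) := by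
  rw [List.ofFn_succ]; rfl

lemma ofFn_getLast? {n : ℕ} (x : Fin (n + 1) → ℝ) :
    (List.ofFn x).getLast? = some (x (Fin.last n)) := by
  have h : List.ofFn x ≠ [] := by simp [List.ofFn_eq_nil_iff]
  rw [List.getLast?_eq_getLast h, List.getLast_ofFn]
  rfl

/-- bridge 2: a nice list gives a strict partition -/
lemma list_to_partition {a b : ℝ} (l : List ℝ) (hne : l ≠ [])
    (hchain : l.Chain' (· < ·)) (hhead : l.head? = some a) (hlast : l.getLast? = some b) :
    ∃ (n : ℕ) (x : Fin (n + 1) → ℝ), StrictMono x ∧ x 0 = a ∧ x (Fin.last n) = b ∧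
      List.ofFn x = l := by
  obtain ⟨n, hn⟩ : ∃ n, l.length = n + 1 := by
    cases l with
    | nil => exact absurd rfl hne
    | cons y r => exact ⟨r.length, by simp⟩
  refine ⟨n, fun i => l.get (Fin.cast hn.symm i), ?_, ?_, ?_, ?_⟩
  · intro i j hij
    have hp : l.Pairwise (· < ·) := List.isChain_iff_pairwise.mp hchain
    apply List.pairwise_iff_get.mp hp
    rw [Fin.lt_def]
    simp only [Fin.coe_cast]
    exact hij
  · rw [List.head?_eq_head hne] at hhead
    simp only [Option.some_inj] at hhead
    rw [← hhead]
    exact List.get_mk_zero (by omega)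
  · rw [List.getLast?_eq_getLast hne] at hlast
    simp only [Option.some_inj] at hlast
    rw [← hlast, List.getLast_eq_getElem]
    simp [Fin.last, hn]
  · refine List.ext_get (by simp [hn]) ?_
    intro i h1 h2
    rw [List.get_ofFn]
    rfl

end LenComp

open LenComp in
/-- If `p : [a, b] → M` is a continuous path of finite length `ℓ` and `f : M → ℝ` satisfies
`limsup_{z → q} |f z - f q| / d(z, q) ≤ k` uniformly on `p([a, b])`, then `f ∘ p` has length
at most `k * ℓ`. -/
theorem length_composition_le {M : Type*} [MetricSpace M] (a b : ℝ) (hab : a ≤ b)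
    (p : ℝ → M) (hcont : ContinuousOn p (Set.Icc a b)) (ℓ : ℝ)
    (hlen : IsLUB {s : ℝ | ∃ (n : ℕ) (x : Fin (n + 1) → ℝ), StrictMono x ∧
      x 0 = a ∧ x (Fin.last n) = b ∧
      s = ∑ i : Fin n, dist (p (x i.castSucc)) (p (x i.succ))} ℓ)
    (f : M → ℝ) (k : ℝ) (hk : 0 ≤ k)
    (hslope : ∀ ε > 0, ∃ δ > 0, ∀ q ∈ p '' Set.Icc a b, ∀ z : M,
      dist z q < δ → |f z - f q| ≤ (k + ε) * dist z q) :
    ∀ (n : ℕ) (x : Fin (n + 1) → ℝ), StrictMono x → x 0 = a → x (Fin.last n) = b →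
      ∑ i : Fin n, |f (p (x i.succ)) - f (p (x i.castSucc))| ≤ k * ℓ := by
  intro n x hx h0 hlast
  have hub : ∀ s ∈ {s : ℝ | ∃ (n : ℕ) (x : Fin (n + 1) → ℝ), StrictMono x ∧
      x 0 = a ∧ x (Fin.last n) = b ∧
      s = ∑ i : Fin n, dist (p (x i.castSucc)) (p (x i.succ))}, s ≤ ℓ := fun s hs => hlen.1 hs
  have hdistmem : (∑ i : Fin n, dist (p (x i.castSucc)) (p (x i.succ))) ∈
      {s : ℝ | ∃ (n : ℕ) (x : Fin (n + 1) → ℝ), StrictMono x ∧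
      x 0 = a ∧ x (Fin.last n) = b ∧
      s = ∑ i : Fin n, dist (p (x i.castSucc)) (p (x i.succ))} := ⟨n, x, hx, h0, hlast, rfl⟩
  have hl0 : 0 ≤ ℓ :=
    le_trans (Finset.sum_nonneg (fun i _ => dist_nonneg)) (hub _ hdistmem)
  have key : ∀ ε > 0, (∑ i : Fin n, |f (p (x i.succ)) - f (p (x i.castSucc))|) ≤ (k + ε) * ℓ := by
    intro ε hε
    obtain ⟨δ, hδpos, hδ⟩ := hslope ε hε
    have hUC := (isCompact_Icc (a := a) (b := b)).uniformContinuousOn_of_continuous hcont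
    rw [Metric.uniformContinuousOn_iff] at hUC
    obtain ⟨δ', hδ'pos, hδ'⟩ := hUC δ hδpos
    set N : ℕ := ⌈(b - a) / δ'⌉₊ + 1 with hNdef
    have hN : 1 ≤ N := Nat.le_add_left 1 _
    have hNpos : (0:ℝ) < N := by positivity
    have hgap : (b - a) / N < δ' := by
      rw [div_lt_iff₀ hNpos]
      have h1 : (b - a) / δ' < (N : ℝ) := by
        refine lt_of_le_of_lt (Nat.le_ceil _) ?_
        exact_mod_cast Nat.lt_succ_self _
      rw [div_lt_iff₀ hδ'pos] at h1
      linarith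
    set fΔ : ℝ → ℝ → ℝ := fun u v => |f (p v) - f (p u)| with hfΔ
    set dΔ : ℝ → ℝ → ℝ := fun u v => dist (p u) (p v) with hdΔ
    have hchainl := ofFn_chain hx h0 hlast
    have hchainm := refine_chain hN (List.ofFn x) hchainl
    have stepA : (∑ i : Fin n, |f (p (x i.succ)) - f (p (x i.castSucc))|) =
        csum fΔ (List.ofFn x) := (csum_ofFn fΔ n x).symm
    have htri : ∀ u v w, fΔ u w ≤ fΔ u v + fΔ v w := by
      intro u v w
      simp only [hfΔ]
      have h := abs_sub_le (f (p w)) (f (p v)) (f (p u))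
      have h2 := abs_sub_comm (f (p w)) (f (p v))
      have h3 := abs_sub_comm (f (p w)) (f (p u))
      have h4 := abs_sub_comm (f (p v)) (f (p u))
      linarith
    have hg0 : ∀ u, fΔ u u ≤ 0 := by intro u; simp [hfΔ]
    have stepB : csum fΔ (List.ofFn x) ≤ csum fΔ (refine N (List.ofFn x)) :=
      csum_le_refine fΔ hg0 htri hN (List.ofFn x)
    have stepC : csum fΔ (refine N (List.ofFn x)) ≤
        csum (fun u v => (k + ε) * dΔ u v) (refine N (List.ofFn x)) := by
      apply csum_mono
      apply List.IsChain.imp ?_ hchainm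
      rintro u v ⟨huv, hau, hvb, hgapuv⟩
      have hu : u ∈ Set.Icc a b := ⟨hau, le_trans huv.le hvb⟩
      have hv : v ∈ Set.Icc a b := ⟨le_trans hau huv.le, hvb⟩
      have hduv : dist u v < δ' := by
        rw [Real.dist_eq, abs_sub_comm, abs_of_nonneg (by linarith)]
        linarith
      have hpd := hδ' u hu v hv hduv
      have hfd := hδ (p u) ⟨u, hu, rfl⟩ (p v) (by rwa [dist_comm])
      simp only [hfΔ, hdΔ]
      calc |f (p v) - f (p u)| ≤ (k + ε) * dist (p v) (p u) := hfd
        _ = (k + ε) * dist (p u) (p v) := by rw [dist_comm]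
    have stepD : csum (fun u v => (k + ε) * dΔ u v) (refine N (List.ofFn x)) =
        (k + ε) * csum dΔ (refine N (List.ofFn x)) := csum_const_mul _ _ _
    have hmne : refine N (List.ofFn x) ≠ [] :=
      refine_ne_nil hN _ (by simp [List.ofFn_eq_nil_iff])
    have hmchainlt : (refine N (List.ofFn x)).Chain' (· < ·) :=
      List.IsChain.imp (fun u v h => h.1) hchainm
    have hmhead : (refine N (List.ofFn x)).head? = some a := by
      rw [refine_head hN, ofFn_head?, h0]
    have hmlast : (refine N (List.ofFn x)).getLast? = some b := by
      rw [refine_getLast hN, ofFn_getLast?, hlast]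
    have stepE : csum dΔ (refine N (List.ofFn x)) ≤ ℓ := by
      obtain ⟨n', x', hx', h0', hl', hofn⟩ :=
        list_to_partition _ hmne hmchainlt hmhead hmlast
      apply hub
      refine ⟨n', x', hx', h0', hl', ?_⟩
      rw [← csum_ofFn dΔ n' x', hofn]
    have hkε : (0:ℝ) ≤ k + ε := by linarith
    calc (∑ i : Fin n, |f (p (x i.succ)) - f (p (x i.castSucc))|)
        = csum fΔ (List.ofFn x) := stepA
      _ ≤ csum fΔ (refine N (List.ofFn x)) := stepB
      _ ≤ csum (fun u v => (k + ε) * dΔ u v) (refine N (List.ofFn x)) := stepC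
      _ = (k + ε) * csum dΔ (refine N (List.ofFn x)) := stepD
      _ ≤ (k + ε) * ℓ := mul_le_mul_of_nonneg_left stepE hkε
  apply le_of_forall_pos_le_add
  intro ε' hε'
  have hεpos : 0 < ε' / (ℓ + 1) := by positivity
  have h1 := key _ hεpos
  have h2 : (ε' / (ℓ + 1)) * ℓ ≤ ε' := by
    rw [div_mul_eq_mul_div, div_le_iff₀ (by linarith)]
    nlinarith
  nlinarith
end

section
/- Let (M, d) be a metric space and let L ≥ 1 be a real number such that for every x, y ∈ M there exist real numbers a ≤ b with b − a ≤ L·d(x, y) and a 1-Lipschitz map p : [a, b] → M with p(a) = x and p(b) = y. Let f : M → ℝ and k ≥ 0, and suppose that at every point q ∈ M, limsup_{z → q} |f(z) − f(q)|/d(z, q) ≤ k. Then f is Lipschitz with constant k·L on M: |f(x) − f(y)| ≤ k·L·d(x, y) for all x, y ∈ M. -/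
/-- In an `L`-quasiconvex metric space, a function whose upper pointwise Lipschitz constant
is at most `k` at every point is Lipschitz with constant `k * L`. -/
theorem lipschitz_of_quasiconvex {M : Type*} [MetricSpace M] (L : ℝ) (hL : 1 ≤ L)
    (hqc : ∀ x y : M, ∃ (a b : ℝ) (p : ℝ → M), a ≤ b ∧ b - a ≤ L * dist x y ∧
      (∀ s ∈ Set.Icc a b, ∀ u ∈ Set.Icc a b, dist (p s) (p u) ≤ |s - u|) ∧
      p a = x ∧ p b = y)
    (f : M → ℝ) (k : ℝ) (hk : 0 ≤ k)
    (hslope : ∀ q : M, ∀ ε > 0, ∃ δ > 0, ∀ z : M,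
      dist z q < δ → |f z - f q| ≤ (k + ε) * dist z q) :
    ∀ x y : M, |f x - f y| ≤ k * L * dist x y := by
  intro x y
  have hC : (0:ℝ) ≤ L * dist x y :=
    mul_nonneg (le_trans zero_le_one hL) dist_nonneg
  have key : ∀ ε > (0:ℝ), |f x - f y| ≤ (k + ε) * (L * dist x y) := by
    intro ε hε
    obtain ⟨a, b, p, hab, hba, hlip, hpa, hpb⟩ := hqc x y
    have hkε : (0:ℝ) ≤ k + ε := by linarith
    set S : Set ℝ := {t | t ∈ Set.Icc a b ∧ |f (p t) - f (p a)| ≤ (k + ε) * (t - a)} with hS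
    have haS : a ∈ S := ⟨⟨le_refl a, hab⟩, by simp⟩
    have hSne : S.Nonempty := ⟨a, haS⟩
    have hSbdd : BddAbove S := ⟨b, fun t ht => ht.1.2⟩
    set m := sSup S with hm
    have hma : a ≤ m := le_csSup hSbdd haS
    have hmb : m ≤ b := csSup_le hSne (fun t ht => ht.1.2)
    have hmIcc : m ∈ Set.Icc a b := ⟨hma, hmb⟩
    obtain ⟨δ, hδ, hδb⟩ := hslope (p m) ε hε
    have hmS : m ∈ S := by
      refine ⟨hmIcc, ?_⟩
      obtain ⟨t, htS, htlt⟩ := exists_lt_of_lt_csSup hSne (show m - δ/2 < m by linarith)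
      have htm : t ≤ m := le_csSup hSbdd htS
      have hd : dist (p t) (p m) ≤ |t - m| := hlip t htS.1 m hmIcc
      have habs : |t - m| = m - t := by rw [abs_sub_comm]; exact abs_of_nonneg (by linarith)
      have hdlt : dist (p t) (p m) < δ := by rw [habs] at hd; linarith
      have h1 : |f (p t) - f (p m)| ≤ (k + ε) * (m - t) := by
        calc |f (p t) - f (p m)| ≤ (k + ε) * dist (p t) (p m) := hδb _ hdlt
          _ ≤ (k + ε) * (m - t) := by
              apply mul_le_mul_of_nonneg_left _ hkε
              rw [habs] at hd; exact hd
      calc |f (p m) - f (p a)| ≤ |f (p m) - f (p t)| + |f (p t) - f (p a)| :=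
            abs_sub_le _ _ _
        _ ≤ (k + ε) * (m - t) + (k + ε) * (t - a) := by
            rw [abs_sub_comm]; exact add_le_add h1 htS.2
        _ = (k + ε) * (m - a) := by ring
    have hmeq : m = b := by
      by_contra hne
      have hmlt : m < b := lt_of_le_of_ne hmb hne
      set t := min b (m + δ/2) with ht
      have htm : m < t := lt_min hmlt (by linarith)
      have htIcc : t ∈ Set.Icc a b := ⟨le_trans hma htm.le, min_le_left _ _⟩
      have hd : dist (p t) (p m) ≤ |t - m| := hlip t htIcc m hmIcc
      have habs : |t - m| = t - m := abs_of_nonneg (by linarith)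
      have htδ : t - m ≤ δ/2 := by
        have := min_le_right b (m + δ/2); linarith
      have hdlt : dist (p t) (p m) < δ := by rw [habs] at hd; linarith
      have htS : t ∈ S := by
        refine ⟨htIcc, ?_⟩
        have h1 : |f (p t) - f (p m)| ≤ (k + ε) * (t - m) := by
          calc |f (p t) - f (p m)| ≤ (k + ε) * dist (p t) (p m) := hδb _ hdlt
            _ ≤ (k + ε) * (t - m) := by
                apply mul_le_mul_of_nonneg_left _ hkε
                rw [habs] at hd; exact hd
        calc |f (p t) - f (p a)| ≤ |f (p t) - f (p m)| + |f (p m) - f (p a)| :=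
              abs_sub_le _ _ _
          _ ≤ (k + ε) * (t - m) + (k + ε) * (m - a) := add_le_add h1 hmS.2
          _ = (k + ε) * (t - a) := by ring
      have := le_csSup hSbdd htS
      linarith
    have hfin : |f y - f x| ≤ (k + ε) * (b - a) := by
      have := hmS.2
      rw [hmeq, hpa, hpb] at this
      exact this
    calc |f x - f y| = |f y - f x| := abs_sub_comm _ _
      _ ≤ (k + ε) * (b - a) := hfin
      _ ≤ (k + ε) * (L * dist x y) := mul_le_mul_of_nonneg_left hba (by linarith)
  have : |f x - f y| ≤ k * (L * dist x y) := by
    refine le_of_forall_pos_le_add fun ε' hε' => ?_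
    have hpos : (0:ℝ) < ε' / (L * dist x y + 1) := by positivity
    have h := key _ hpos
    have hmul : (ε' / (L * dist x y + 1)) * (L * dist x y) ≤ ε' := by
      rw [div_mul_eq_mul_div, div_le_iff₀ (by linarith)]
      nlinarith
    nlinarith
  linarith [this, mul_assoc k L (dist x y) ▸ this]
end

section
/- Let (M, d) be a metric space and let L ≥ 1 be a real number such that for every x, y ∈ M there exist real numbers a ≤ b with b − a ≤ L·d(x, y) and a 1-Lipschitz map p : [a, b] → M with p(a) = x and p(b) = y. Let f : M → ℝ and suppose that f has gradient zero at every point q ∈ M, i.e. lim_{z → q} |f(z) − f(q)|/d(z, q) = 0. Then f is constant on M. -/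
/-- In an `L`-quasiconvex metric space, a function with gradient zero at every point is
constant. -/
theorem constant_of_quasiconvex_gradient_zero {M : Type*} [MetricSpace M] (L : ℝ)
    (hL : 1 ≤ L)
    (hqc : ∀ x y : M, ∃ (a b : ℝ) (p : ℝ → M), a ≤ b ∧ b - a ≤ L * dist x y ∧
      (∀ s ∈ Set.Icc a b, ∀ u ∈ Set.Icc a b, dist (p s) (p u) ≤ |s - u|) ∧
      p a = x ∧ p b = y)
    (f : M → ℝ)
    (hgrad : ∀ q : M, ∀ ε > 0, ∃ δ > 0, ∀ z : M,
      0 < dist z q → dist z q < δ → |f z - f q| ≤ ε * dist z q) :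
    ∀ x y : M, f x = f y := by
  intro x y
  obtain ⟨a, b, p, hab, hba, hlip, hpa, hpb⟩ := hqc x y
  rcases eq_or_lt_of_le hab with heq | hltab
  · rw [← hpa, ← hpb, heq]
  · have key : ∀ ε : ℝ, 0 < ε → |f y - f x| ≤ ε * (b - a) := by
      intro ε hε
      set S : Set ℝ := {t | t ∈ Set.Icc a b ∧ |f (p t) - f (p a)| ≤ ε * (t - a)} with hSdef
      have haS : a ∈ S := ⟨⟨le_refl a, hab⟩, by simp⟩
      have hne : S.Nonempty := ⟨a, haS⟩
      have hbdd : BddAbove S := ⟨b, fun t ht => ht.1.2⟩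
      set T := sSup S with hTdef
      have hTa : a ≤ T := le_csSup hbdd haS
      have hTb : T ≤ b := csSup_le hne (fun t ht => ht.1.2)
      have hTmem : T ∈ Set.Icc a b := ⟨hTa, hTb⟩
      have hTS : |f (p T) - f (p a)| ≤ ε * (T - a) := by
        obtain ⟨δ, hδ, hq⟩ := hgrad (p T) ε hε
        obtain ⟨t, htS, hlt'⟩ := exists_lt_of_lt_csSup hne (show T - δ < T by linarith)
        have htT : t ≤ T := le_csSup hbdd htS
        have hdist : dist (p t) (p T) ≤ |t - T| := hlip t htS.1 T hTmem
        have habs : |t - T| = T - t := by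
          rw [abs_sub_comm]; exact abs_of_nonneg (by linarith)
        have hd2 : dist (p t) (p T) < δ := by rw [habs] at hdist; linarith
        have hfb : |f (p T) - f (p t)| ≤ ε * (T - t) := by
          rcases eq_or_lt_of_le (dist_nonneg : (0:ℝ) ≤ dist (p t) (p T)) with h0 | h0
          · have hpt : p t = p T := by rw [← dist_eq_zero]; exact h0.symm
            rw [hpt]
            simp only [sub_self, abs_zero]
            have : 0 ≤ T - t := by linarith
            positivity
          · have := hq (p t) h0 hd2
            rw [abs_sub_comm] at this
            calc |f (p T) - f (p t)| ≤ ε * dist (p t) (p T) := this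
              _ ≤ ε * (T - t) := by
                  apply mul_le_mul_of_nonneg_left _ hε.le
                  rw [habs] at hdist; exact hdist
        calc |f (p T) - f (p a)| ≤ |f (p T) - f (p t)| + |f (p t) - f (p a)| :=
              abs_sub_le _ _ _
          _ ≤ ε * (T - t) + ε * (t - a) := add_le_add hfb htS.2
          _ = ε * (T - a) := by ring
      have hTeqb : T = b := by
        by_contra hne'
        have hTltb : T < b := lt_of_le_of_ne hTb hne'
        obtain ⟨δ, hδ, hq⟩ := hgrad (p T) ε hε
        set t := min b (T + δ/2) with htdef
        have htgtT : T < t := lt_min hTltb (by linarith)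
        have htb : t ≤ b := min_le_left _ _
        have hta : a ≤ t := le_trans hTa htgtT.le
        have hdist : dist (p t) (p T) ≤ |t - T| := hlip t ⟨hta, htb⟩ T hTmem
        have habs : |t - T| = t - T := abs_of_nonneg (by linarith)
        have htδ : t - T ≤ δ/2 := by
          have := min_le_right b (T + δ/2)
          simp only [htdef] at *
          linarith
        have hd2 : dist (p t) (p T) < δ := by rw [habs] at hdist; linarith
        have hfb : |f (p t) - f (p T)| ≤ ε * (t - T) := by
          rcases eq_or_lt_of_le (dist_nonneg : (0:ℝ) ≤ dist (p t) (p T)) with h0 | h0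
          · have hpt : p t = p T := by rw [← dist_eq_zero]; exact h0.symm
            rw [hpt]
            simp only [sub_self, abs_zero]
            have : 0 ≤ t - T := by linarith
            positivity
          · calc |f (p t) - f (p T)| ≤ ε * dist (p t) (p T) := hq (p t) h0 hd2
              _ ≤ ε * (t - T) := by
                  apply mul_le_mul_of_nonneg_left _ hε.le
                  rw [habs] at hdist; exact hdist
        have htS : t ∈ S := by
          refine ⟨⟨hta, htb⟩, ?_⟩
          calc |f (p t) - f (p a)| ≤ |f (p t) - f (p T)| + |f (p T) - f (p a)| :=
                abs_sub_le _ _ _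
            _ ≤ ε * (t - T) + ε * (T - a) := add_le_add hfb hTS
            _ = ε * (t - a) := by ring
        have : t ≤ T := le_csSup hbdd htS
        linarith
      rw [← hpa, ← hpb]
      rw [hTeqb] at hTS
      exact hTS
    have h0 : |f y - f x| ≤ 0 := by
      refine le_of_forall_pos_le_add ?_
      intro η hη
      have hpos : 0 < b - a := by linarith
      have := key (η / (b - a)) (by positivity)
      calc |f y - f x| ≤ (η / (b - a)) * (b - a) := this
        _ = η := by field_simp
        _ ≤ 0 + η := by linarith
    have : f y - f x = 0 := by
      have := abs_nonneg (f y - f x)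
      have : |f y - f x| = 0 := le_antisymm h0 this
      exact abs_eq_zero.mp this
    linarith
end
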